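/- arXiv:1806.05209 — 11 statements merged into one kernel-verified Lean document; each statement's English description precedes it below -/
import Mathlib

section
/- Let σ be a finite type, R a commutative ring, and S an additive submonoid of the monoid ℕ^σ of exponent vectors. Let f be a multivariate formal power series in MvPowerSeries σ R whose constant coefficient is a unit of R. Then there exists a unique power series g ∈ MvPowerSeries σ R such that (i) g is supported on S (the coefficient of g at every exponent vector d ∉ S is 0), and (ii) the restriction of f·g to S equals 1, i.e. the coefficient of f·g at 0 is 1 and the coefficient of f·g at every nonzero d ∈ S is 0. Moreover, the constant coefficient of this g is a unit of R. -/
open Finset.HasAntidiagonal (antidiagonal mem_antidiagonal)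

noncomputable def relAux {σ R : Type*} [CommRing R] (a : R) (S : AddSubmonoid (σ →₀ ℕ))
    (φ : MvPowerSeries σ R) : MvPowerSeries σ R
  | n =>
    letI := Classical.decEq σ
    letI : Decidable (n ∈ S) := Classical.dec _
    if n ∈ S then
      if n = 0 then a
      else
        -a * ∑ x ∈ antidiagonal n,
          if _ : x.2 < n then MvPowerSeries.coeff x.1 φ * relAux a S φ x.2 else 0
    else 0
termination_by n => n

theorem coeff_relAux {σ R : Type*} [CommRing R] [DecidableEq σ] (n : σ →₀ ℕ) (a : R)
    (S : AddSubmonoid (σ →₀ ℕ)) [Decidable (n ∈ S)] (φ : MvPowerSeries σ R) :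
    MvPowerSeries.coeff n (relAux a S φ) =
      if n ∈ S then
        if n = 0 then a
        else
          -a * ∑ x ∈ antidiagonal n,
            if x.2 < n then MvPowerSeries.coeff x.1 φ *
              MvPowerSeries.coeff x.2 (relAux a S φ) else 0
      else 0 :=
  show relAux a S φ n = _ by
    cases Subsingleton.elim ‹DecidableEq σ› (Classical.decEq σ)
    cases Subsingleton.elim ‹Decidable (n ∈ S)› (Classical.dec _)
    rw [relAux]
    rfl

theorem snd_lt_of_ne {σ : Type*} [DecidableEq σ] (n : σ →₀ ℕ) (x : (σ →₀ ℕ) × (σ →₀ ℕ))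
    (hx : x ∈ antidiagonal n) (hne : x ≠ (0, n)) : x.2 < n := by
  rw [mem_antidiagonal] at hx
  have hle : x.2 ≤ n := le_iff_exists_add'.mpr ⟨x.1, hx.symm⟩
  refine lt_of_le_of_ne hle fun h => hne ?_
  have h1 : x.1 = 0 := by
    rw [h] at hx
    exact add_eq_right.mp hx
  exact Prod.ext h1 h

theorem relAux_mul_coeff {σ R : Type*} [CommRing R] (S : AddSubmonoid (σ →₀ ℕ))
    (φ : MvPowerSeries σ R) (u : Rˣ) (h : MvPowerSeries.constantCoeff φ = u)
    (n : σ →₀ ℕ) (hn : n ∈ S) [Decidable (n = 0)] :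
    MvPowerSeries.coeff n (φ * relAux (↑u⁻¹) S φ) = if n = 0 then 1 else 0 := by
  classical
  by_cases H : n = 0
  · subst H
    rw [if_pos rfl, MvPowerSeries.coeff_mul, Finsupp.antidiagonal_zero, Finset.sum_singleton]
    rw [show ((0,0) : (σ →₀ ℕ) × (σ →₀ ℕ)).1 = 0 from rfl,
      show ((0,0) : (σ →₀ ℕ) × (σ →₀ ℕ)).2 = 0 from rfl,
      coeff_relAux, if_pos S.zero_mem, if_pos rfl,
      MvPowerSeries.coeff_zero_eq_constantCoeff_apply, h]
    exact u.mul_inv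
  · rw [if_neg H, MvPowerSeries.coeff_mul]
    have hmem : ((0 : σ →₀ ℕ), n) ∈ antidiagonal n := by rw [mem_antidiagonal, zero_add]
    rw [← Finset.insert_erase hmem, Finset.sum_insert (Finset.notMem_erase _ _),
      MvPowerSeries.coeff_zero_eq_constantCoeff_apply, h, coeff_relAux, if_pos hn, if_neg H,
      neg_mul, mul_neg, Units.mul_inv_cancel_left, ← Finset.insert_erase hmem,
      Finset.sum_insert (Finset.notMem_erase _ _), Finset.insert_erase hmem,
      if_neg (not_lt_of_ge le_rfl), zero_add, add_comm, ← sub_eq_add_neg, sub_eq_zero,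
      Finset.sum_congr rfl]
    intro x hx
    rw [Finset.mem_erase] at hx
    rw [if_pos (snd_lt_of_ne n x hx.2 hx.1)]

/-- **Relative inverse** (Proposition 2.1): for a multivariate power series `f` over a
commutative ring `R` whose constant coefficient is a unit, and an additive submonoid `S`
of exponent vectors, there is a unique power series `g` supported on `S` such that
`(f * g)|_S = 1`; moreover the constant coefficient of `g` is a unit. -/
theorem stmt_0 (σ : Type*) [Fintype σ] (R : Type*) [CommRing R]
    (S : AddSubmonoid (σ →₀ ℕ)) (f : MvPowerSeries σ R)
    (hf : IsUnit (MvPowerSeries.constantCoeff f)) :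
    (∃! g : MvPowerSeries σ R,
      (∀ d : σ →₀ ℕ, d ∉ S → MvPowerSeries.coeff d g = 0) ∧
      MvPowerSeries.coeff 0 (f * g) = 1 ∧
      (∀ d : σ →₀ ℕ, d ∈ S → d ≠ 0 → MvPowerSeries.coeff d (f * g) = 0)) ∧
    (∀ g : MvPowerSeries σ R,
      ((∀ d : σ →₀ ℕ, d ∉ S → MvPowerSeries.coeff d g = 0) ∧
        MvPowerSeries.coeff 0 (f * g) = 1 ∧
        (∀ d : σ →₀ ℕ, d ∈ S → d ≠ 0 → MvPowerSeries.coeff d (f * g) = 0)) →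
      IsUnit (MvPowerSeries.constantCoeff g)) := by
  classical
  obtain ⟨u, hu⟩ := hf
  constructor
  · refine ⟨relAux (↑u⁻¹) S f, ⟨?_, ?_, ?_⟩, ?_⟩
    · intro d hd
      rw [coeff_relAux, if_neg hd]
    · rw [relAux_mul_coeff S f u hu.symm 0 S.zero_mem, if_pos rfl]
    · intro d hd hd0
      rw [relAux_mul_coeff S f u hu.symm d hd, if_neg hd0]
    · rintro g' ⟨hs', h0', hS'⟩
      have key : ∀ n, MvPowerSeries.coeff n g' = MvPowerSeries.coeff n (relAux (↑u⁻¹) S f) := by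
        intro n
        induction n using WellFoundedLT.induction with
        | _ n IH =>
          by_cases hn : n ∈ S
          · have h1 : MvPowerSeries.coeff n (f * g') =
                MvPowerSeries.coeff n (f * relAux (↑u⁻¹) S f) := by
              by_cases H : n = 0
              · subst H
                rw [h0', relAux_mul_coeff S f u hu.symm 0 S.zero_mem, if_pos rfl]
              · rw [hS' n hn H, relAux_mul_coeff S f u hu.symm n hn, if_neg H]
            rw [MvPowerSeries.coeff_mul, MvPowerSeries.coeff_mul] at h1
            have hmem : ((0 : σ →₀ ℕ), n) ∈ antidiagonal n := by rw [mem_antidiagonal, zero_add]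
            rw [← Finset.insert_erase hmem, Finset.sum_insert (Finset.notMem_erase _ _),
              Finset.sum_insert (Finset.notMem_erase _ _)] at h1
            have h2 : ∑ x ∈ (antidiagonal n).erase (0, n),
                MvPowerSeries.coeff x.1 f * MvPowerSeries.coeff x.2 g' =
                ∑ x ∈ (antidiagonal n).erase (0, n),
                MvPowerSeries.coeff x.1 f *
                  MvPowerSeries.coeff x.2 (relAux (↑u⁻¹) S f) := by
              refine Finset.sum_congr rfl fun x hx => ?_
              rw [Finset.mem_erase] at hx
              rw [IH x.2 (snd_lt_of_ne n x hx.2 hx.1)]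
            rw [h2, add_right_cancel_iff] at h1
            have hunit : IsUnit (MvPowerSeries.coeff (0 : σ →₀ ℕ) f) := by
              rw [MvPowerSeries.coeff_zero_eq_constantCoeff_apply, ← hu]
              exact u.isUnit
            exact hunit.mul_left_cancel h1
          · rw [hs' n hn, coeff_relAux, if_neg hn]
      exact MvPowerSeries.ext key
  · rintro g ⟨-, h0, -⟩
    rw [MvPowerSeries.coeff_mul] at h0
    simp only [Finsupp.antidiagonal_zero, Finset.sum_singleton] at h0
    rw [MvPowerSeries.coeff_zero_eq_constantCoeff_apply,
      MvPowerSeries.coeff_zero_eq_constantCoeff_apply] at h0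
    exact IsUnit.of_mul_eq_one _ (by rw [mul_comm]; exact h0)
end

section
/- Let σ be a finite type and let f ∈ MvPowerSeries σ ℤ[t] (multivariate power series with coefficients in the polynomial ring ℤ[t]) have constant coefficient 1. Then there exists a unique function m assigning to each nonzero exponent vector λ ∈ ℕ^σ a finitely supported function m(λ,·) : ℕ → ℤ such that f = ∏_{λ ≠ 0} ∏_{n ≥ 0} (1 − tⁿX^λ)^{m(λ,n)} in the coefficientwise sense: for every exponent vector d, the coefficient of X^d in f equals the coefficient of X^d in the finite product over all nonzero λ with λ ≤ d (componentwise) and all n in the support of m(λ,·) of (1 − tⁿX^λ)^{m(λ,n)}, where negative integer powers are interpreted via inverses in the power series ring (each 1 − tⁿX^λ is invertible since its constant coefficient in the X-variables is 1 ∈ ℤ[t]). -/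
/-- Integer powers of a multivariate power series whose constant coefficient is `1`:
nonnegative powers are ordinary powers, negative powers are powers of the inverse
`MvPowerSeries.invOfUnit f 1`. -/
noncomputable def zpowSeries {σ : Type*} {R : Type*} [CommRing R]
    (f : MvPowerSeries σ R) (n : ℤ) : MvPowerSeries σ R :=
  if 0 ≤ n then f ^ n.toNat else (MvPowerSeries.invOfUnit f 1) ^ (-n).toNat

open Finset Polynomial

namespace Stmt2Aux

variable {σ : Type*} {R : Type*} [CommRing R]

/-- `g` is supported on multiples of `lam`. -/
def OnMul (lam : σ →₀ ℕ) (g : MvPowerSeries σ R) : Prop :=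
  ∀ b : σ →₀ ℕ, (∀ j : ℕ, b ≠ j • lam) → MvPowerSeries.coeff (R := R) b g = 0

theorem coeff_one_ne {lam : σ →₀ ℕ} (hlam : lam ≠ 0) :
    MvPowerSeries.coeff (R := R) lam (1 : MvPowerSeries σ R) = 0 := by
  classical
  rw [MvPowerSeries.coeff_one, if_neg hlam]

theorem OnMul.one (lam : σ →₀ ℕ) : OnMul lam (1 : MvPowerSeries σ R) := by
  intro b hb
  classical
  have hb0 : b ≠ 0 := by simpa using hb 0
  rw [MvPowerSeries.coeff_one, if_neg hb0]

theorem OnMul.monomial (lam : σ →₀ ℕ) (p : R) :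
    OnMul lam (MvPowerSeries.monomial (R := R) lam p) := by
  intro b hb
  classical
  have hb1 : b ≠ lam := by simpa using hb 1
  rw [MvPowerSeries.coeff_monomial, if_neg hb1]

theorem OnMul.sub {lam : σ →₀ ℕ} {g h : MvPowerSeries σ R}
    (hg : OnMul lam g) (hh : OnMul lam h) : OnMul lam (g - h) := by
  intro b hb
  rw [map_sub, hg b hb, hh b hb, sub_zero]

theorem OnMul.mul {lam : σ →₀ ℕ} {g h : MvPowerSeries σ R}
    (hg : OnMul lam g) (hh : OnMul lam h) : OnMul lam (g * h) := by
  intro b hb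
  classical
  rw [MvPowerSeries.coeff_mul]
  apply Finset.sum_eq_zero
  rintro ⟨x, y⟩ hxy
  rw [HasAntidiagonal.mem_antidiagonal] at hxy
  by_cases hx : ∀ j : ℕ, x ≠ j • lam
  · rw [hg x hx, zero_mul]
  · push_neg at hx
    obtain ⟨i, rfl⟩ := hx
    by_cases hy : ∀ j : ℕ, y ≠ j • lam
    · rw [hh y hy, mul_zero]
    · push_neg at hy
      obtain ⟨j, rfl⟩ := hy
      exfalso
      exact hb (i + j) (by rw [← hxy, add_smul])

theorem OnMul.pow {lam : σ →₀ ℕ} {g : MvPowerSeries σ R}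
    (hg : OnMul lam g) (k : ℕ) : OnMul lam (g ^ k) := by
  induction k with
  | zero => simpa using OnMul.one lam
  | succ k IH => rw [pow_succ]; exact IH.mul hg

theorem OnMul.invOfUnit {lam : σ →₀ ℕ} {g : MvPowerSeries σ R}
    (hg : OnMul lam g) : OnMul lam (MvPowerSeries.invOfUnit g 1) := by
  classical
  intro b
  induction b using (Finsupp.lt_wf σ).induction with
  | _ b IH =>
    intro hb
    have hb0 : b ≠ 0 := by simpa using hb 0
    rw [MvPowerSeries.coeff_invOfUnit, if_neg hb0]
    have hz : ∑ x ∈ antidiagonal b,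
        (if x.2 < b then MvPowerSeries.coeff (R := R) x.1 g *
          MvPowerSeries.coeff (R := R) x.2 (MvPowerSeries.invOfUnit g 1) else 0) = 0 := by
      apply Finset.sum_eq_zero
      rintro ⟨x, y⟩ hxy
      rw [HasAntidiagonal.mem_antidiagonal] at hxy
      split_ifs with hlt
      · by_cases hx : ∀ j : ℕ, x ≠ j • lam
        · rw [hg x hx, zero_mul]
        · push_neg at hx
          obtain ⟨i, rfl⟩ := hx
          by_cases hy : ∀ j : ℕ, y ≠ j • lam
          · rw [IH y hlt hy, mul_zero]
          · push_neg at hy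
            obtain ⟨j, rfl⟩ := hy
            exact absurd (by rw [← hxy, add_smul]) (hb (i + j))
      · rfl
    rw [hz, mul_zero]

theorem OnMul.zpow {lam : σ →₀ ℕ} {g : MvPowerSeries σ R}
    (hg : OnMul lam g) (z : ℤ) : OnMul lam (zpowSeries g z) := by
  unfold zpowSeries
  split
  · exact hg.pow _
  · exact hg.invOfUnit.pow _

theorem c0_zpow {g : MvPowerSeries σ R}
    (hg : MvPowerSeries.constantCoeff (σ := σ) (R := R) g = 1) (z : ℤ) :
    MvPowerSeries.constantCoeff (σ := σ) (R := R) (zpowSeries g z) = 1 := by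
  unfold zpowSeries
  split <;> simp [map_pow, hg]

theorem coeff_mul_of {lam : σ →₀ ℕ} (hlam : lam ≠ 0) {g h : MvPowerSeries σ R}
    (hg : OnMul lam g) (hg0 : MvPowerSeries.constantCoeff (σ := σ) (R := R) g = 1)
    (hh0 : MvPowerSeries.constantCoeff (σ := σ) (R := R) h = 1) :
    MvPowerSeries.coeff (R := R) lam (g * h) =
      MvPowerSeries.coeff (R := R) lam g + MvPowerSeries.coeff (R := R) lam h := by
  classical
  rw [MvPowerSeries.coeff_mul]
  have hsub : ({(0, lam), (lam, 0)} : Finset ((σ →₀ ℕ) × (σ →₀ ℕ))) ⊆ antidiagonal lam := by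
    intro x hx
    rw [Finset.mem_insert, Finset.mem_singleton] at hx
    rcases hx with rfl | rfl <;> simp [HasAntidiagonal.mem_antidiagonal]
  rw [← Finset.sum_subset hsub ?_]
  · rw [Finset.sum_pair (by simp [Prod.ext_iff, Ne, eq_comm]; exact fun h => absurd h hlam)]
    rw [MvPowerSeries.coeff_zero_eq_constantCoeff_apply,
      MvPowerSeries.coeff_zero_eq_constantCoeff_apply, hg0, hh0, one_mul, mul_one, add_comm]
  · rintro ⟨x, y⟩ hxy hnxy
    rw [HasAntidiagonal.mem_antidiagonal] at hxy
    by_cases hx : ∀ j : ℕ, x ≠ j • lam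
    · rw [hg x hx, zero_mul]
    · push_neg at hx
      obtain ⟨i, rfl⟩ := hx
      exfalso
      apply hnxy
      rw [Finset.mem_insert, Finset.mem_singleton]
      match i with
      | 0 =>
        left
        have hx0 : (0:ℕ) • lam = 0 := zero_smul _ _
        rw [hx0] at hxy ⊢
        rw [zero_add] at hxy
        rw [Prod.ext_iff]
        exact ⟨rfl, hxy⟩
      | 1 =>
        right
        have hx1 : (1:ℕ) • lam = lam := one_smul _ _
        rw [hx1] at hxy ⊢
        have hy0 : y = 0 := by
          have h' : lam + y = lam + 0 := by rw [add_zero]; exact hxy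
          exact add_left_cancel h'
        rw [Prod.ext_iff]
        exact ⟨rfl, hy0⟩
      | (i+2) =>
        exfalso
        obtain ⟨s0, hs0⟩ := Finsupp.support_nonempty_iff.mpr hlam
        have hle : (i+2) • lam ≤ lam := le_self_add.trans_eq hxy
        have h1 : (i+2) * lam s0 ≤ lam s0 := by
          have := hle s0
          simpa using this
        have h2 : 1 ≤ lam s0 := Nat.one_le_iff_ne_zero.mpr (Finsupp.mem_support_iff.mp hs0)
        nlinarith

theorem coeff_prod_of {lam : σ →₀ ℕ} (hlam : lam ≠ 0) {ι : Type*} {s : Finset ι}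
    {F : ι → MvPowerSeries σ R}
    (h1 : ∀ i ∈ s, OnMul lam (F i))
    (h2 : ∀ i ∈ s, MvPowerSeries.constantCoeff (σ := σ) (R := R) (F i) = 1) :
    MvPowerSeries.coeff (R := R) lam (∏ i ∈ s, F i) = ∑ i ∈ s, MvPowerSeries.coeff (R := R) lam (F i) := by
  classical
  induction s using Finset.cons_induction with
  | empty => simpa using coeff_one_ne (R := R) hlam
  | cons a s ha IH =>
    rw [Finset.prod_cons, Finset.sum_cons,
      coeff_mul_of hlam (h1 a (Finset.mem_cons_self a s)) (h2 a (Finset.mem_cons_self a s))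
        (by rw [map_prod]; exact Finset.prod_eq_one fun i hi => h2 i (Finset.mem_cons_of_mem hi)),
      IH (fun i hi => h1 i (Finset.mem_cons_of_mem hi))
        (fun i hi => h2 i (Finset.mem_cons_of_mem hi))]

theorem coeff_pow_of {lam : σ →₀ ℕ} (hlam : lam ≠ 0) {g : MvPowerSeries σ R}
    (hg : OnMul lam g) (hg0 : MvPowerSeries.constantCoeff (σ := σ) (R := R) g = 1) (k : ℕ) :
    MvPowerSeries.coeff (R := R) lam (g ^ k) = k • MvPowerSeries.coeff (R := R) lam g := by
  induction k with
  | zero =>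
    rw [pow_zero, zero_smul, coeff_one_ne hlam]
  | succ k IH =>
    rw [pow_succ, coeff_mul_of hlam (hg.pow k) (by rw [map_pow, hg0, one_pow]) hg0, IH,
      succ_nsmul]

theorem coeff_invOfUnit_of {lam : σ →₀ ℕ} (hlam : lam ≠ 0) {g : MvPowerSeries σ R}
    (hg : OnMul lam g) (hg0 : MvPowerSeries.constantCoeff (σ := σ) (R := R) g = 1) :
    MvPowerSeries.coeff (R := R) lam (MvPowerSeries.invOfUnit g 1) = -MvPowerSeries.coeff (R := R) lam g := by
  have h1 : g * MvPowerSeries.invOfUnit g 1 = 1 :=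
    MvPowerSeries.mul_invOfUnit g 1 (by simpa using hg0)
  have h2 := congrArg (MvPowerSeries.coeff (R := R) lam) h1
  rw [coeff_mul_of hlam hg hg0 (by simp), coeff_one_ne hlam] at h2
  linear_combination h2

theorem coeff_zpow_of {lam : σ →₀ ℕ} (hlam : lam ≠ 0) {g : MvPowerSeries σ R}
    (hg : OnMul lam g) (hg0 : MvPowerSeries.constantCoeff (σ := σ) (R := R) g = 1) (z : ℤ) :
    MvPowerSeries.coeff (R := R) lam (zpowSeries g z) = z • MvPowerSeries.coeff (R := R) lam g := by
  unfold zpowSeries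
  split
  · rename_i hz
    obtain ⟨k, rfl⟩ := Int.eq_ofNat_of_zero_le hz
    rw [coeff_pow_of hlam hg hg0]
    simp [natCast_zsmul]
  · rename_i hz
    push_neg at hz
    obtain ⟨k, hk⟩ := Int.eq_ofNat_of_zero_le (by omega : (0:ℤ) ≤ -z)
    have hzk : z = -(k : ℤ) := by omega
    rw [hk, coeff_pow_of hlam hg.invOfUnit (by simp), coeff_invOfUnit_of hlam hg hg0, hzk]
    simp [smul_neg, natCast_zsmul]

/-- The polynomial with coefficient finsupp `v`. -/
noncomputable def pol (v : ℕ →₀ ℤ) : Polynomial ℤ :=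
  ∑ n ∈ v.support, Polynomial.monomial n (v n)

theorem pol_coeff (v : ℕ →₀ ℤ) (k : ℕ) : (pol v).coeff k = v k := by
  classical
  simp only [pol, Polynomial.finset_sum_coeff, Polynomial.coeff_monomial]
  rw [Finset.sum_ite_eq' v.support k v]
  split_ifs with h
  · rfl
  · exact (Finsupp.notMem_support_iff.mp h).symm

theorem pol_injective : Function.Injective pol := fun v w h =>
  Finsupp.ext fun k => by rw [← pol_coeff v k, ← pol_coeff w k, h]

theorem pol_toFinsupp (p : Polynomial ℤ) : pol p.toFinsupp.coeff = p :=
  Polynomial.ext fun k => by rw [pol_coeff]; exact Polynomial.toFinsupp_apply p k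

/-- The factor of the product form at exponent vector `lam` with exponents `v`. -/
noncomputable def Fac (lam : σ →₀ ℕ) (v : ℕ →₀ ℤ) : MvPowerSeries σ (Polynomial ℤ) :=
  ∏ n ∈ v.support,
    zpowSeries (1 - MvPowerSeries.monomial (R := Polynomial ℤ) lam (Polynomial.X ^ n)) (v n)

theorem onMul_fac (lam : σ →₀ ℕ) (v : ℕ →₀ ℤ) : OnMul lam (Fac lam v) := by
  rw [Fac]
  refine Finset.prod_induction _ _ (fun a b ha hb => ha.mul hb) (OnMul.one lam) ?_
  intro n _
  exact ((OnMul.one lam).sub (OnMul.monomial lam _)).zpow _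

theorem c0_one_sub_monomial {lam : σ →₀ ℕ} (hlam : lam ≠ 0) (p : Polynomial ℤ) :
    MvPowerSeries.constantCoeff (σ := σ) (R := Polynomial ℤ)
      (1 - MvPowerSeries.monomial (R := Polynomial ℤ) lam p) = 1 := by
  classical
  rw [map_sub, map_one, ← MvPowerSeries.coeff_zero_eq_constantCoeff_apply,
    MvPowerSeries.coeff_monomial, if_neg (fun h => hlam h.symm), sub_zero]

theorem c0_fac {lam : σ →₀ ℕ} (hlam : lam ≠ 0) (v : ℕ →₀ ℤ) :
    MvPowerSeries.constantCoeff (σ := σ) (R := Polynomial ℤ) (Fac lam v) = 1 := by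
  rw [Fac, map_prod]
  exact Finset.prod_eq_one fun n _ => c0_zpow (c0_one_sub_monomial hlam _) _

theorem coeff_fac {lam : σ →₀ ℕ} (hlam : lam ≠ 0) (v : ℕ →₀ ℤ) :
    MvPowerSeries.coeff (R := Polynomial ℤ) lam (Fac lam v) = -pol v := by
  rw [Fac, coeff_prod_of hlam
    (fun n _ => ((OnMul.one lam).sub (OnMul.monomial lam _)).zpow _)
    (fun n _ => c0_zpow (c0_one_sub_monomial hlam _) _), pol, ← Finset.sum_neg_distrib]
  refine Finset.sum_congr rfl fun n _ => ?_
  rw [coeff_zpow_of hlam ((OnMul.one lam).sub (OnMul.monomial lam _))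
    (c0_one_sub_monomial hlam _), map_sub, coeff_one_ne hlam,
    MvPowerSeries.coeff_monomial_same, zero_sub, smul_neg, zsmul_eq_mul,
    ← Polynomial.C_eq_intCast, Polynomial.C_mul_X_pow_eq_monomial]
  simp

section Main

variable [Fintype σ]

open Classical

theorem coeff_P {d : σ →₀ ℕ} (hd : d ≠ 0) (m : (σ →₀ ℕ) → (ℕ →₀ ℤ)) :
    MvPowerSeries.coeff (R := Polynomial ℤ) d (∏ lam ∈ (Finset.Iic d).erase 0, Fac lam (m lam)) =
      MvPowerSeries.coeff (R := Polynomial ℤ) d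
        (∏ lam ∈ ((Finset.Iic d).erase 0).erase d, Fac lam (m lam)) - pol (m d) := by
  have hmem : d ∈ (Finset.Iic d).erase 0 :=
    Finset.mem_erase.mpr ⟨hd, Finset.mem_Iic.mpr le_rfl⟩
  have e1 : (∏ lam ∈ (Finset.Iic d).erase 0, Fac lam (m lam)) =
      Fac d (m d) * ∏ lam ∈ ((Finset.Iic d).erase 0).erase d, Fac lam (m lam) :=
    (Finset.mul_prod_erase _ _ hmem).symm
  have hc : MvPowerSeries.constantCoeff (σ := σ) (R := Polynomial ℤ)
      (∏ lam ∈ ((Finset.Iic d).erase 0).erase d, Fac lam (m lam)) = 1 := by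
    rw [map_prod]
    refine Finset.prod_eq_one fun lam hl => ?_
    exact c0_fac (Finset.mem_erase.mp (Finset.mem_erase.mp hl).2).1 (m lam)
  rw [e1, coeff_mul_of hd (onMul_fac d (m d)) (c0_fac hd (m d)) hc, coeff_fac hd]
  ring

/-- The recursively defined product-form exponent family. -/
noncomputable def mA (f : MvPowerSeries σ (Polynomial ℤ)) : (σ →₀ ℕ) → (ℕ →₀ ℤ) :=
  (Finsupp.lt_wf σ).fix fun d rec =>
    if hd : d = 0 then 0
    else
      (MvPowerSeries.coeff (R := Polynomial ℤ) d
          (∏ lam ∈ (((Finset.Iic d).erase 0).erase d).attach,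
            Fac lam.1
              (rec lam.1
                (lt_of_le_of_ne
                  (Finset.mem_Iic.mp (Finset.mem_erase.mp (Finset.mem_erase.mp lam.2).2).2)
                  (Finset.mem_erase.mp lam.2).1))) -
        MvPowerSeries.coeff (R := Polynomial ℤ) d f).toFinsupp.coeff

theorem mA_zero (f : MvPowerSeries σ (Polynomial ℤ)) : mA f 0 = 0 := by
  rw [mA, WellFounded.fix_eq, dif_pos rfl]

theorem mA_eq (f : MvPowerSeries σ (Polynomial ℤ)) {d : σ →₀ ℕ} (hd : d ≠ 0) :
    mA f d =
      (MvPowerSeries.coeff (R := Polynomial ℤ) d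
          (∏ lam ∈ ((Finset.Iic d).erase 0).erase d, Fac lam (mA f lam)) -
        MvPowerSeries.coeff (R := Polynomial ℤ) d f).toFinsupp.coeff := by
  conv_lhs => rw [mA, WellFounded.fix_eq]
  rw [dif_neg hd]
  congr 4
  exact Finset.prod_attach (((Finset.Iic d).erase 0).erase d)
    (fun lam => Fac lam (mA f lam))

theorem mA_spec (f : MvPowerSeries σ (Polynomial ℤ))
    (hf : MvPowerSeries.constantCoeff (σ := σ) (R := Polynomial ℤ) f = 1) (d : σ →₀ ℕ) :
    MvPowerSeries.coeff (R := Polynomial ℤ) d f =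
      MvPowerSeries.coeff (R := Polynomial ℤ) d
        (∏ lam ∈ (Finset.Iic d).erase 0, Fac lam (mA f lam)) := by
  by_cases hd : d = 0
  · subst hd
    have e : (∏ lam ∈ (Finset.Iic (0 : σ →₀ ℕ)).erase 0, Fac lam (mA f lam)) = 1 := by
      refine Finset.prod_eq_one fun lam hl => ?_
      exfalso
      obtain ⟨h1, h2⟩ := Finset.mem_erase.mp hl
      exact h1 (le_antisymm (Finset.mem_Iic.mp h2) zero_le)
    rw [e, MvPowerSeries.coeff_zero_eq_constantCoeff_apply, hf]
    simp
  · rw [coeff_P hd (mA f)]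
    have h1 : pol (mA f d) =
        MvPowerSeries.coeff (R := Polynomial ℤ) d
            (∏ lam ∈ ((Finset.Iic d).erase 0).erase d, Fac lam (mA f lam)) -
          MvPowerSeries.coeff (R := Polynomial ℤ) d f := by
      rw [mA_eq f hd, pol_toFinsupp]
    rw [h1]
    ring

theorem mA_unique (f : MvPowerSeries σ (Polynomial ℤ))
    (m : (σ →₀ ℕ) → (ℕ →₀ ℤ)) (h0 : m 0 = 0)
    (heq : ∀ d : σ →₀ ℕ, MvPowerSeries.coeff (R := Polynomial ℤ) d f =
      MvPowerSeries.coeff (R := Polynomial ℤ) d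
        (∏ lam ∈ (Finset.Iic d).erase 0, Fac lam (m lam)))
    (d : σ →₀ ℕ) : m d = mA f d := by
  induction d using (Finsupp.lt_wf σ).induction with
  | _ d IH =>
    by_cases hd : d = 0
    · subst hd
      rw [h0, mA_zero]
    · have hQ : (∏ lam ∈ ((Finset.Iic d).erase 0).erase d, Fac lam (m lam)) =
          ∏ lam ∈ ((Finset.Iic d).erase 0).erase d, Fac lam (mA f lam) := by
        refine Finset.prod_congr rfl fun lam hl => ?_
        have hlt : lam < d :=
          lt_of_le_of_ne
            (Finset.mem_Iic.mp (Finset.mem_erase.mp (Finset.mem_erase.mp hl).2).2)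
            (Finset.mem_erase.mp hl).1
        rw [IH lam hlt]
      have h2 := heq d
      rw [coeff_P hd m, hQ] at h2
      have h3 : pol (m d) =
          MvPowerSeries.coeff (R := Polynomial ℤ) d
              (∏ lam ∈ ((Finset.Iic d).erase 0).erase d, Fac lam (mA f lam)) -
            MvPowerSeries.coeff (R := Polynomial ℤ) d f := by
        linear_combination h2
      have h4 : pol (mA f d) =
          MvPowerSeries.coeff (R := Polynomial ℤ) d
              (∏ lam ∈ ((Finset.Iic d).erase 0).erase d, Fac lam (mA f lam)) -
            MvPowerSeries.coeff (R := Polynomial ℤ) d f := by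
        rw [mA_eq f hd, pol_toFinsupp]
      exact pol_injective (h3.trans h4.symm)

end Main

end Stmt2Aux

open Classical in
/-- **Unique product form over ℤ[t]** (Proposition 2.2, ℤ[t]-coefficient case): every
multivariate power series over `ℤ[t]` with constant coefficient `1` can be written
uniquely as `∏_{λ ≠ 0} ∏_{n ≥ 0} (1 - tⁿ X^λ)^{m(λ,n)}`, interpreted coefficientwise:
the coefficient at `d` equals the coefficient at `d` of the finite product over nonzero
`λ ≤ d` and `n` in the support of the finitely supported function `m λ : ℕ →₀ ℤ`.
(The family `m` is normalized by `m 0 = 0`.) -/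
theorem stmt_2 (σ : Type*) [Fintype σ]
    (f : MvPowerSeries σ (Polynomial ℤ))
    (hf : MvPowerSeries.constantCoeff (σ := σ) (R := Polynomial ℤ) f = 1) :
    ∃! m : (σ →₀ ℕ) → (ℕ →₀ ℤ),
      m 0 = 0 ∧
      ∀ d : σ →₀ ℕ, MvPowerSeries.coeff (R := Polynomial ℤ) d f =
        MvPowerSeries.coeff (R := Polynomial ℤ) d
          (∏ lam ∈ (Finset.Iic d).erase 0, ∏ n ∈ (m lam).support,
            zpowSeries (1 - MvPowerSeries.monomial (R := Polynomial ℤ) lam (Polynomial.X ^ n))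
              (m lam n)) := by
  refine ⟨Stmt2Aux.mA f, ⟨Stmt2Aux.mA_zero f, Stmt2Aux.mA_spec f hf⟩, ?_⟩
  rintro m ⟨h0, heq⟩
  funext d
  exact Stmt2Aux.mA_unique f m h0 heq d
end

section
/- Let σ be a finite type and let f be a multivariate power series in MvPowerSeries σ R where R = ℤ[t,t⁻¹] is the ring of Laurent polynomials over ℤ, and suppose f has constant coefficient 1. Then there exists a unique function m assigning to each nonzero exponent vector λ ∈ ℕ^σ a finitely supported function m(λ,·) : ℤ → ℤ such that f = ∏_{λ ≠ 0} ∏_{n ∈ ℤ} (1 − tⁿX^λ)^{m(λ,n)} in the coefficientwise sense: for every exponent vector d, the coefficient of X^d in f equals the coefficient of X^d in the finite product over all nonzero λ with λ ≤ d (componentwise) and all n in the support of m(λ,·) of (1 − tⁿX^λ)^{m(λ,n)}, where negative integer powers are interpreted via inverses in the power series ring (each 1 − tⁿX^λ is invertible since its constant coefficient in the X-variables is 1 ∈ ℤ[t,t⁻¹]). -/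
set_option linter.unusedSectionVars false

open MvPowerSeries LaurentPolynomial Finset

namespace Stmt3Aux

/-- Identity map exploiting `LaurentPolynomial ℤ = (ℤ →₀ ℤ)` definitionally. -/
def ofF : (ℤ →₀ ℤ) → LaurentPolynomial ℤ := fun c => AddMonoidAlgebra.ofCoeff c

lemma ofF_injective : Function.Injective ofF := AddMonoidAlgebra.ofCoeff_injective

lemma sum_smul_T (c : ℤ →₀ ℤ) :
    ∑ n ∈ c.support, (c n) • LaurentPolynomial.T (R := ℤ) n = ofF c := by
  have h : ∀ n, (c n) • LaurentPolynomial.T (R := ℤ) n = AddMonoidAlgebra.single n (c n) := by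
    intro n
    rw [zsmul_eq_mul, ← eq_intCast (LaurentPolynomial.C (R := ℤ)) (c n), single_eq_C_mul_T]
  simp_rw [h, ← AddMonoidAlgebra.ofCoeff_single, ← AddMonoidAlgebra.ofCoeff_sum]
  exact congrArg AddMonoidAlgebra.ofCoeff (Finsupp.sum_single c)

variable {σ : Type*} [Fintype σ]

/-- Total degree of an exponent vector. -/
def deg (d : σ →₀ ℕ) : ℕ := ∑ s, d s

lemma deg_lt {a d : σ →₀ ℕ} (h1 : a ≤ d) (h2 : a ≠ d) : deg a < deg d := by
  obtain ⟨s, hs⟩ : ∃ s, a s ≠ d s := by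
    by_contra h; push_neg at h; exact h2 (Finsupp.ext h)
  exact Finset.sum_lt_sum (fun i _ => Finsupp.le_def.mp h1 i)
    ⟨s, Finset.mem_univ s, lt_of_le_of_ne (Finsupp.le_def.mp h1 s) hs⟩

lemma smul_le_self_aux {lam : σ →₀ ℕ} (hlam : lam ≠ 0) {j : ℕ} (h : j • lam ≤ lam) : j ≤ 1 := by
  by_contra hj
  push_neg at hj
  obtain ⟨s, hs⟩ : ∃ s, lam s ≠ 0 := by
    by_contra h'; push_neg at h'; exact hlam (Finsupp.ext fun s => h' s)
  have h2 := Finsupp.le_def.mp h s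
  rw [Finsupp.smul_apply, smul_eq_mul] at h2
  have := Nat.pos_of_ne_zero hs
  nlinarith

variable {A : Type*} [CommRing A]

/-- `g` has constant coefficient `1`, coefficient `a` at `lam`, and is supported on
multiples of `lam`. -/
def Good (lam : σ →₀ ℕ) (a : A) (g : MvPowerSeries σ A) : Prop :=
  (MvPowerSeries.constantCoeff (σ := σ) (R := A) g = 1) ∧ (MvPowerSeries.coeff (R := A) lam g = a) ∧
    ∀ d : σ →₀ ℕ, (∀ j : ℕ, d ≠ j • lam) → MvPowerSeries.coeff (R := A) d g = 0

lemma Good.ne_multiple {lam : σ →₀ ℕ} {a : A} {g : MvPowerSeries σ A}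
    (hg : Good lam a g) {e : σ →₀ ℕ} (he : MvPowerSeries.coeff (R := A) e g ≠ 0) :
    ∃ j : ℕ, e = j • lam := by
  by_contra h'
  push_neg at h'
  exact he (hg.2.2 e h')

lemma good_one {lam : σ →₀ ℕ} (hlam : lam ≠ 0) : Good lam (0 : A) 1 := by
  refine ⟨map_one _, ?_, ?_⟩
  · classical
    rw [MvPowerSeries.coeff_one, if_neg hlam]
  · intro d hd
    classical
    rw [MvPowerSeries.coeff_one, if_neg]
    intro h0
    exact hd 0 (by simp [h0])

/-- Key multiplication lemma: picking out the coefficient at `lam` of `g * h`. -/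
lemma key_mul {lam : σ →₀ ℕ} (hlam : lam ≠ 0) {a : A} {g : MvPowerSeries σ A}
    (hg : Good lam a g) (h : MvPowerSeries σ A) :
    MvPowerSeries.coeff (R := A) lam (g * h) =
      MvPowerSeries.coeff (R := A) lam h + a * MvPowerSeries.constantCoeff (σ := σ) (R := A) h := by
  classical
  rw [MvPowerSeries.coeff_mul]
  rw [Finset.sum_eq_add (0, lam) (lam, 0)
    (by simp [hlam, Prod.ext_iff, Ne.symm hlam])
    ?_ (fun hmem => absurd (by simp) hmem) (fun hmem => absurd (by simp) hmem)]
  · simp [MvPowerSeries.coeff_zero_eq_constantCoeff, hg.1, hg.2.1]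
  · rintro ⟨p1, p2⟩ hp ⟨hne1, hne2⟩
    rw [HasAntidiagonal.mem_antidiagonal] at hp
    by_cases hz : MvPowerSeries.coeff (R := A) p1 g = 0
    · rw [hz, zero_mul]
    obtain ⟨j, rfl⟩ := Good.ne_multiple hg hz
    have hle : j • lam ≤ lam := le_iff_exists_add.mpr ⟨p2, hp.symm⟩
    have hj1 : j ≤ 1 := smul_le_self_aux hlam hle
    interval_cases j
    · exact absurd (by simpa using hp) (by simpa using hne1)
    · have h0 : p2 = 0 := by rwa [one_smul, add_eq_left] at hp
      exact absurd (show ((1:ℕ) • lam, p2) = (lam, 0) by simp [h0]) hne2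

lemma good_mul {lam : σ →₀ ℕ} (hlam : lam ≠ 0) {a b : A} {g h : MvPowerSeries σ A}
    (hg : Good lam a g) (hh : Good lam b h) : Good lam (a + b) (g * h) := by
  classical
  refine ⟨by rw [map_mul, hg.1, hh.1, one_mul], ?_, ?_⟩
  · rw [key_mul hlam hg h, hh.1, hh.2.1, mul_one, add_comm]
  · intro d hd
    rw [MvPowerSeries.coeff_mul]
    apply Finset.sum_eq_zero
    rintro ⟨p1, p2⟩ hp
    rw [HasAntidiagonal.mem_antidiagonal] at hp
    by_cases hz : MvPowerSeries.coeff (R := A) p1 g = 0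
    · rw [hz, zero_mul]
    by_cases hz2 : MvPowerSeries.coeff (R := A) p2 h = 0
    · rw [hz2, mul_zero]
    obtain ⟨j, rfl⟩ := Good.ne_multiple hg hz
    obtain ⟨k, rfl⟩ := Good.ne_multiple hh hz2
    exact absurd (by rw [← hp, add_smul]) (hd (j + k))

lemma good_pow {lam : σ →₀ ℕ} (hlam : lam ≠ 0) {a : A} {g : MvPowerSeries σ A}
    (hg : Good lam a g) : ∀ j : ℕ, Good lam (j • a) (g ^ j)
  | 0 => by simpa using good_one hlam
  | (j + 1) => by
      rw [pow_succ, succ_nsmul]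
      exact good_mul hlam (good_pow hlam hg j) hg

lemma good_inv {lam : σ →₀ ℕ} (hlam : lam ≠ 0) {a : A} {g : MvPowerSeries σ A}
    (hg : Good lam a g) : Good lam (-a) (MvPowerSeries.invOfUnit g 1) := by
  classical
  set h := MvPowerSeries.invOfUnit g 1 with hh
  have hmul : g * h = 1 := MvPowerSeries.mul_invOfUnit g 1 (by rw [hg.1]; rfl)
  have hc0 : MvPowerSeries.constantCoeff (σ := σ) (R := A) h = 1 := by
    have h1 := congrArg (MvPowerSeries.constantCoeff (σ := σ) (R := A)) hmul
    rwa [map_mul, hg.1, one_mul, map_one] at h1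
  have hsupp : ∀ N : ℕ, ∀ d : σ →₀ ℕ, deg d ≤ N → (∀ j : ℕ, d ≠ j • lam) →
      MvPowerSeries.coeff (R := A) d h = 0 := by
    intro N
    induction N using Nat.strong_induction_on with
    | _ N ih =>
      intro d hdN hd
      have hd0 : d ≠ 0 := fun h0 => hd 0 (by simp [h0])
      have h1 : MvPowerSeries.coeff (R := A) d (g * h) = 0 := by
        rw [hmul, MvPowerSeries.coeff_one, if_neg hd0]
      rw [MvPowerSeries.coeff_mul] at h1
      rw [Finset.sum_eq_single (0, d) ?_ (fun hmem => absurd (by simp) hmem)] at h1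
      · rwa [MvPowerSeries.coeff_zero_eq_constantCoeff_apply, hg.1, one_mul] at h1
      · rintro ⟨p1, p2⟩ hp hne
        rw [HasAntidiagonal.mem_antidiagonal] at hp
        by_cases hz : MvPowerSeries.coeff (R := A) p1 g = 0
        · rw [hz, zero_mul]
        have hp1 : p1 ≠ 0 := by
          rintro rfl
          exact hne (by simpa using hp)
        have hp2d : p2 ≠ d := by
          rintro rfl
          exact hp1 (by simpa using hp)
        have hp2le : p2 ≤ d := le_iff_exists_add.mpr ⟨p1, by rw [← hp, add_comm]⟩
        have hp2mult : ∀ j : ℕ, p2 ≠ j • lam := by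
          obtain ⟨j, rfl⟩ := Good.ne_multiple hg hz
          intro k hk
          exact hd (j + k) (by rw [← hp, hk, add_smul])
        rw [ih (deg p2) (lt_of_lt_of_le (deg_lt hp2le hp2d) hdN) p2 le_rfl hp2mult, mul_zero]
  refine ⟨hc0, ?_, fun d hd => hsupp (deg d) d le_rfl hd⟩
  have h2 : MvPowerSeries.coeff (R := A) lam (g * h) = 0 := by
    rw [hmul, MvPowerSeries.coeff_one, if_neg hlam]
  rw [key_mul hlam hg h, hc0, mul_one] at h2
  exact eq_neg_of_add_eq_zero_left h2
lemma good_zpow {lam : σ →₀ ℕ} (hlam : lam ≠ 0) {a : A} {g : MvPowerSeries σ A}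
    (hg : Good lam a g) (k : ℤ) : Good lam (k • a) (zpowSeries g k) := by
  rw [zpowSeries]
  split_ifs with hk
  · have := good_pow hlam hg k.toNat
    rwa [← natCast_zsmul, Int.toNat_of_nonneg hk] at this
  · have := good_pow hlam (good_inv hlam hg) (-k).toNat
    rwa [← natCast_zsmul, Int.toNat_of_nonneg (by omega), smul_neg, ← neg_zsmul, neg_neg]
      at this

lemma good_base {lam : σ →₀ ℕ} (hlam : lam ≠ 0) (r : A) :
    Good lam (-r) (1 - MvPowerSeries.monomial (R := A) lam r) := by
  classical
  refine ⟨?_, ?_, ?_⟩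
  · rw [map_sub, map_one, ← MvPowerSeries.coeff_zero_eq_constantCoeff_apply,
      MvPowerSeries.coeff_monomial, if_neg (Ne.symm hlam), sub_zero]
  · rw [map_sub, MvPowerSeries.coeff_one, if_neg hlam, MvPowerSeries.coeff_monomial_same,
      zero_sub]
  · intro d hd
    have hd0 : d ≠ 0 := fun h0 => hd 0 (by simp [h0])
    have hdl : d ≠ lam := fun h0 => hd 1 (by simp [h0])
    rw [map_sub, MvPowerSeries.coeff_one, if_neg hd0, MvPowerSeries.coeff_monomial,
      if_neg hdl, sub_zero]

lemma good_prod {lam : σ →₀ ℕ} (hlam : lam ≠ 0) {ι : Type*} (s : Finset ι)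
    (a : ι → A) (g : ι → MvPowerSeries σ A) (h : ∀ i ∈ s, Good lam (a i) (g i)) :
    Good lam (∑ i ∈ s, a i) (∏ i ∈ s, g i) := by
  classical
  induction s using Finset.induction_on with
  | empty => simpa using good_one hlam
  | @insert x s' hx ih =>
    rw [Finset.sum_insert hx, Finset.prod_insert hx]
    exact good_mul hlam (h x (Finset.mem_insert_self x s'))
      (ih fun i hi => h i (Finset.mem_insert_of_mem hi))
noncomputable def Fprod (lam : σ →₀ ℕ) (c : ℤ →₀ ℤ) : MvPowerSeries σ (LaurentPolynomial ℤ) :=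
  ∏ n ∈ c.support,
    zpowSeries (1 - MvPowerSeries.monomial (R := LaurentPolynomial ℤ) lam (LaurentPolynomial.T n))
      (c n)

lemma good_Fprod {lam : σ →₀ ℕ} (hlam : lam ≠ 0) (c : ℤ →₀ ℤ) :
    Good lam (-(ofF c)) (Fprod lam c) := by
  have h := good_prod hlam c.support (fun n => (c n) • (-(LaurentPolynomial.T (R := ℤ) n)))
    (fun n => zpowSeries
      (1 - MvPowerSeries.monomial (R := LaurentPolynomial ℤ) lam (LaurentPolynomial.T n)) (c n))
    (fun n _ => good_zpow hlam (good_base hlam (LaurentPolynomial.T n)) (c n))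
  rw [Fprod]
  convert h using 2
  rw [← sum_smul_T c, ← Finset.sum_neg_distrib]
  exact Finset.sum_congr rfl fun n _ => (smul_neg _ _).symm

def toF : LaurentPolynomial ℤ → (ℤ →₀ ℤ) := fun x => x.coeff

lemma ofF_toF (x : LaurentPolynomial ℤ) : ofF (toF x) = x := rfl

open Classical in
noncomputable def mdef [Fintype σ] (f : MvPowerSeries σ (LaurentPolynomial ℤ)) (d : σ →₀ ℕ) : ℤ →₀ ℤ :=
  if d = 0 then 0 else
    toF (MvPowerSeries.coeff (R := LaurentPolynomial ℤ) d
          (∏ lam ∈ (((Finset.Iic d).erase 0).erase d).attach, Fprod lam.1 (mdef f lam.1))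
        - MvPowerSeries.coeff (R := LaurentPolynomial ℤ) d f)
termination_by deg d
decreasing_by
  · have hmem := lam.2
    rw [Finset.mem_erase, Finset.mem_erase, Finset.mem_Iic] at hmem
    exact deg_lt hmem.2.2 hmem.1

lemma mdef_zero (f : MvPowerSeries σ (LaurentPolynomial ℤ)) : mdef f 0 = 0 := by
  rw [mdef]; simp

open Classical in
lemma mdef_eq (f : MvPowerSeries σ (LaurentPolynomial ℤ)) (d : σ →₀ ℕ) (hd : d ≠ 0) :
    ofF (mdef f d) = MvPowerSeries.coeff (R := LaurentPolynomial ℤ) d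
        (∏ lam ∈ ((Finset.Iic d).erase 0).erase d, Fprod lam (mdef f lam))
      - MvPowerSeries.coeff (R := LaurentPolynomial ℤ) d f := by
  conv_lhs => rw [mdef]
  rw [if_neg hd, ofF_toF,
    Finset.prod_attach (((Finset.Iic d).erase 0).erase d) (fun lam => Fprod lam (mdef f lam))]

open Classical in
lemma coeff_step (m : (σ →₀ ℕ) → (ℤ →₀ ℤ)) {d : σ →₀ ℕ} (hd : d ≠ 0) :
    MvPowerSeries.coeff (R := LaurentPolynomial ℤ) d
        (∏ lam ∈ (Finset.Iic d).erase 0, Fprod lam (m lam)) =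
      MvPowerSeries.coeff (R := LaurentPolynomial ℤ) d
        (∏ lam ∈ ((Finset.Iic d).erase 0).erase d, Fprod lam (m lam))
      - ofF (m d) := by
  have hdmem : d ∈ (Finset.Iic d).erase 0 :=
    Finset.mem_erase.mpr ⟨hd, Finset.mem_Iic.mpr le_rfl⟩
  rw [← Finset.mul_prod_erase _ _ hdmem, key_mul hd (good_Fprod hd (m d)),
    map_prod (MvPowerSeries.constantCoeff (σ := σ) (R := LaurentPolynomial ℤ))
      (fun lam => Fprod lam (m lam)) (((Finset.Iic d).erase 0).erase d)]
  rw [Finset.prod_eq_one fun lam hlam =>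
    (good_Fprod (Finset.mem_erase.mp (Finset.mem_erase.mp hlam).2).1 (m lam)).1]
  ring
end Stmt3Aux

open Stmt3Aux

open Classical in
/-- **Unique product form over ℤ[t,t⁻¹]** (Proposition 2.2, Laurent-polynomial case):
every multivariate power series over the Laurent polynomial ring `ℤ[t,t⁻¹]` with constant
coefficient `1` can be written uniquely as `∏_{λ ≠ 0} ∏_{n ∈ ℤ} (1 - tⁿ X^λ)^{m(λ,n)}`,
interpreted coefficientwise: the coefficient at `d` equals the coefficient at `d` of the
finite product over nonzero `λ ≤ d` and `n` in the support of the finitely supported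
function `m λ : ℤ →₀ ℤ`. (The family `m` is normalized by `m 0 = 0`; `tⁿ` is the Laurent
monomial `LaurentPolynomial.T n`.) -/
theorem stmt_3 (σ : Type*) [Fintype σ]
    (f : MvPowerSeries σ (LaurentPolynomial ℤ))
    (hf : MvPowerSeries.constantCoeff (σ := σ) (R := LaurentPolynomial ℤ) f = 1) :
    ∃! m : (σ →₀ ℕ) → (ℤ →₀ ℤ),
      m 0 = 0 ∧
      ∀ d : σ →₀ ℕ, MvPowerSeries.coeff (R := LaurentPolynomial ℤ) d f =
        MvPowerSeries.coeff (R := LaurentPolynomial ℤ) d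
          (∏ lam ∈ (Finset.Iic d).erase 0, ∏ n ∈ (m lam).support,
            zpowSeries
              (1 - MvPowerSeries.monomial (R := LaurentPolynomial ℤ) lam (LaurentPolynomial.T n))
              (m lam n)) := by
  have hconv : ∀ (m : (σ →₀ ℕ) → (ℤ →₀ ℤ)) (d : σ →₀ ℕ),
      (∏ lam ∈ (Finset.Iic d).erase 0, ∏ n ∈ (m lam).support,
        zpowSeries
          (1 - MvPowerSeries.monomial (R := LaurentPolynomial ℤ) lam (LaurentPolynomial.T n))
          (m lam n))
      = ∏ lam ∈ (Finset.Iic d).erase 0, Fprod lam (m lam) := fun m d => rfl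
  have hIic0 : (Finset.Iic (0 : σ →₀ ℕ)).erase 0 = ∅ := by
    ext x
    simp only [Finset.mem_erase, Finset.mem_Iic, Finset.notMem_empty, iff_false, not_and]
    intro hx hle
    exact hx (nonpos_iff_eq_zero.mp hle)
  refine ⟨mdef f, ⟨mdef_zero f, ?_⟩, ?_⟩
  · intro d
    rw [hconv]
    by_cases hd : d = 0
    · subst hd
      rw [hIic0, Finset.prod_empty, MvPowerSeries.coeff_zero_eq_constantCoeff_apply,
        MvPowerSeries.coeff_zero_eq_constantCoeff_apply, hf, map_one]
    · rw [coeff_step (mdef f) hd, mdef_eq f d hd]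
      ring
  · rintro m' ⟨hm0, hm⟩
    funext d
    suffices h : ∀ N, ∀ d : σ →₀ ℕ, deg d ≤ N → m' d = mdef f d from h (deg d) d le_rfl
    intro N
    induction N using Nat.strong_induction_on with
    | _ N ih =>
      intro d hdN
      by_cases hd : d = 0
      · subst hd
        rw [hm0, mdef_zero]
      · have h1 := hm d
        rw [hconv, coeff_step m' hd] at h1
        have hrest : (∏ lam ∈ ((Finset.Iic d).erase 0).erase d, Fprod lam (m' lam))
            = ∏ lam ∈ ((Finset.Iic d).erase 0).erase d, Fprod lam (mdef f lam) := by
          refine Finset.prod_congr rfl fun lam hlam => ?_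
          have hmem := Finset.mem_erase.mp hlam
          have hle := Finset.mem_Iic.mp (Finset.mem_erase.mp hmem.2).2
          rw [ih (deg lam) (lt_of_lt_of_le (deg_lt hle hmem.1) hdN) lam le_rfl]
        rw [hrest] at h1
        apply ofF_injective
        rw [mdef_eq f d hd, h1]
        ring
end

section
/- Let σ be a finite type, S an additive submonoid of ℕ^σ, and let f ∈ MvPowerSeries σ ℤ[t] have constant coefficient 1 and be supported on S (the coefficient of f at every exponent vector d ∉ S is 0). Let m be the product-form exponent family of f, i.e. the unique family with f = ∏_{λ ≠ 0} ∏_{n ≥ 0} (1 − tⁿX^λ)^{m(λ,n)}. Then m(λ,n) = 0 for every λ ∉ S and every n. -/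
section Aux

open MvPowerSeries Finset

variable {σ : Type*} {R : Type*} [CommRing R]

/-- supported in an additive submonoid of exponents -/
def SuppIn (M : AddSubmonoid (σ →₀ ℕ)) (g : MvPowerSeries σ R) : Prop :=
  ∀ d, d ∉ M → MvPowerSeries.coeff (R := R) d g = 0

theorem suppIn_one (M : AddSubmonoid (σ →₀ ℕ)) : SuppIn M (1 : MvPowerSeries σ R) := by
  classical
  intro d hd
  rw [MvPowerSeries.coeff_one]
  have : d ≠ 0 := by rintro rfl; exact hd M.zero_mem
  simp [this]

theorem suppIn_mul {M : AddSubmonoid (σ →₀ ℕ)} {a b : MvPowerSeries σ R}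
    (ha : SuppIn M a) (hb : SuppIn M b) : SuppIn M (a * b) := by
  classical
  intro d hd
  rw [MvPowerSeries.coeff_mul]
  refine Finset.sum_eq_zero fun p hp => ?_
  rw [Finset.HasAntidiagonal.mem_antidiagonal] at hp
  by_cases h1 : p.1 ∈ M
  · have h2 : p.2 ∉ M := fun h2 => hd (hp ▸ M.add_mem h1 h2)
    rw [hb _ h2, mul_zero]
  · rw [ha _ h1, zero_mul]

theorem suppIn_prod {M : AddSubmonoid (σ →₀ ℕ)} {ι : Type*} {s : Finset ι}
    {g : ι → MvPowerSeries σ R} (h : ∀ i ∈ s, SuppIn M (g i)) :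
    SuppIn M (∏ i ∈ s, g i) :=
  Finset.prod_induction g (SuppIn M) (fun _ _ => suppIn_mul) (suppIn_one M) h

theorem suppIn_pow {M : AddSubmonoid (σ →₀ ℕ)} {a : MvPowerSeries σ R}
    (ha : SuppIn M a) (k : ℕ) : SuppIn M (a ^ k) := by
  induction k with
  | zero => simpa using suppIn_one M
  | succ n ih => rw [pow_succ]; exact suppIn_mul ih ha

theorem suppIn_invOfUnit {M : AddSubmonoid (σ →₀ ℕ)} {a : MvPowerSeries σ R}
    (ha : SuppIn M a) (u : Rˣ) : SuppIn M (MvPowerSeries.invOfUnit a u) := by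
  classical
  intro d
  induction d using WellFoundedLT.induction with
  | _ d ih =>
    intro hd
    rw [MvPowerSeries.coeff_invOfUnit]
    have hd0 : d ≠ 0 := by rintro rfl; exact hd M.zero_mem
    rw [if_neg hd0]
    have : ∑ x ∈ Finset.HasAntidiagonal.antidiagonal d,
        (if x.2 < d then MvPowerSeries.coeff (R := R) x.1 a *
          MvPowerSeries.coeff (R := R) x.2 (MvPowerSeries.invOfUnit a u) else 0) = 0 := by
      refine Finset.sum_eq_zero fun p hp => ?_
      rw [Finset.HasAntidiagonal.mem_antidiagonal] at hp
      split_ifs with hlt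
      · by_cases h1 : p.1 ∈ M
        · have h2 : p.2 ∉ M := fun h2 => hd (hp ▸ M.add_mem h1 h2)
          rw [ih _ hlt h2, mul_zero]
        · rw [ha _ h1, zero_mul]
      · rfl
    rw [this, mul_zero]

/-- the key binary coefficient extraction at a nonzero `lam` for two series
supported on multiples of `lam` -/
theorem coeff_mul_of_suppIn_closure {lam : σ →₀ ℕ} (hlam : lam ≠ 0)
    {a b : MvPowerSeries σ R}
    (ha : SuppIn (AddSubmonoid.closure {lam}) a)
    (hb : SuppIn (AddSubmonoid.closure {lam}) b) :
    MvPowerSeries.coeff (R := R) lam (a * b) =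
      MvPowerSeries.coeff (R := R) 0 a * MvPowerSeries.coeff (R := R) lam b +
        MvPowerSeries.coeff (R := R) lam a * MvPowerSeries.coeff (R := R) 0 b := by
  classical
  rw [MvPowerSeries.coeff_mul]
  have hne : ((0 : σ →₀ ℕ), lam) ≠ (lam, (0 : σ →₀ ℕ)) := by
    intro h
    exact hlam (congrArg Prod.fst h).symm
  have hsub : ({((0 : σ →₀ ℕ), lam), (lam, (0 : σ →₀ ℕ))} : Finset _) ⊆
      Finset.HasAntidiagonal.antidiagonal lam := by
    intro p hp
    rw [Finset.mem_insert, Finset.mem_singleton] at hp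
    rcases hp with rfl | rfl <;> simp [Finset.HasAntidiagonal.mem_antidiagonal]
  rw [← Finset.sum_subset hsub ?hz]
  · rw [Finset.sum_pair hne]
  case hz =>
    intro p hp hnp
    rw [Finset.HasAntidiagonal.mem_antidiagonal] at hp
    rw [Finset.mem_insert, Finset.mem_singleton] at hnp
    push_neg at hnp
    by_cases h1 : p.1 ∈ AddSubmonoid.closure ({lam} : Set (σ →₀ ℕ))
    · by_cases h2 : p.2 ∈ AddSubmonoid.closure ({lam} : Set (σ →₀ ℕ))
      · exfalso
        rw [AddSubmonoid.mem_closure_singleton] at h1 h2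
        obtain ⟨j, hj⟩ := h1
        obtain ⟨k, hk⟩ := h2
        have hsum : (j + k) • lam = lam := by
          rw [add_smul, hj, hk]; exact hp
        obtain ⟨i, hi⟩ : ∃ i, lam i ≠ 0 := by
          by_contra hc
          push_neg at hc
          exact hlam (Finsupp.ext hc)
        have : (j + k) * lam i = lam i := by
          have := congrArg (fun v => v i) hsum
          simpa [Finsupp.smul_apply] using this
        have hjk : j + k = 1 := by
          rcases Nat.lt_or_ge (j + k) 1 with h | h
          · interval_cases h' : (j + k)
            · simp at this; omega
          · rcases Nat.lt_or_ge 1 (j + k) with h' | h'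
            · nlinarith [Nat.pos_of_ne_zero hi]
            · omega
        have hcases : j = 0 ∧ k = 1 ∨ j = 1 ∧ k = 0 := by omega
        rcases hcases with ⟨rfl, rfl⟩ | ⟨rfl, rfl⟩
        · exact hnp.1 (Prod.ext (by simpa using hj.symm) (by simpa using hk.symm))
        · exact hnp.2 (Prod.ext (by simpa using hj.symm) (by simpa using hk.symm))
      · rw [hb _ h2, mul_zero]
    · rw [ha _ h1, zero_mul]

end Aux

section Factor

open MvPowerSeries Finset

variable {σ : Type*} {R : Type*} [CommRing R]

theorem constCoeff_factor {lam : σ →₀ ℕ} (hlam : lam ≠ 0) (p : R) :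
    MvPowerSeries.constantCoeff (σ := σ) (R := R) (1 - MvPowerSeries.monomial (R := R) lam p) = 1 := by
  classical
  rw [map_sub, map_one, ← MvPowerSeries.coeff_zero_eq_constantCoeff_apply,
    MvPowerSeries.coeff_monomial, if_neg (fun h => hlam h.symm), sub_zero]

theorem suppIn_factor (lam : σ →₀ ℕ) (p : R) :
    SuppIn (AddSubmonoid.closure {lam}) (1 - MvPowerSeries.monomial (R := R) lam p) := by
  classical
  intro d hd
  have hd0 : d ≠ 0 := by rintro rfl; exact hd (AddSubmonoid.zero_mem _)
  have hdl : d ≠ lam := by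
    rintro rfl; exact hd (AddSubmonoid.mem_closure_singleton.2 ⟨1, one_smul _ _⟩)
  rw [map_sub, MvPowerSeries.coeff_one, if_neg hd0, MvPowerSeries.coeff_monomial,
    if_neg hdl, sub_zero]

theorem coeff_lam_factor {lam : σ →₀ ℕ} (hlam : lam ≠ 0) (p : R) :
    MvPowerSeries.coeff (R := R) lam (1 - MvPowerSeries.monomial (R := R) lam p) = -p := by
  classical
  rw [map_sub, MvPowerSeries.coeff_one, if_neg hlam, MvPowerSeries.coeff_monomial,
    if_pos rfl, zero_sub]

theorem constCoeff_zpowSeries {g : MvPowerSeries σ R}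
    (hg : MvPowerSeries.constantCoeff (σ := σ) (R := R) g = 1) (z : ℤ) :
    MvPowerSeries.constantCoeff (σ := σ) (R := R) (zpowSeries g z) = 1 := by
  unfold zpowSeries
  split_ifs
  · rw [map_pow, hg, one_pow]
  · rw [map_pow, MvPowerSeries.constantCoeff_invOfUnit]
    simp

theorem suppIn_zpowSeries {M : AddSubmonoid (σ →₀ ℕ)} {g : MvPowerSeries σ R}
    (hg : SuppIn M g) (z : ℤ) : SuppIn M (zpowSeries g z) := by
  unfold zpowSeries
  split_ifs
  · exact suppIn_pow hg _
  · exact suppIn_pow (suppIn_invOfUnit hg 1) _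

theorem coeff_lam_prod {lam : σ →₀ ℕ} (hlam : lam ≠ 0) {ι : Type*} (s : Finset ι)
    (u : ι → MvPowerSeries σ R)
    (hc : ∀ i ∈ s, MvPowerSeries.constantCoeff (σ := σ) (R := R) (u i) = 1)
    (hs : ∀ i ∈ s, SuppIn (AddSubmonoid.closure {lam}) (u i)) :
    MvPowerSeries.coeff (R := R) lam (∏ i ∈ s, u i) =
      ∑ i ∈ s, MvPowerSeries.coeff (R := R) lam (u i) := by
  classical
  induction s using Finset.induction with
  | empty =>
    simp [MvPowerSeries.coeff_one, hlam]
  | @insert a t hni ih =>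
    rw [Finset.prod_insert hni, Finset.sum_insert hni,
      coeff_mul_of_suppIn_closure hlam (hs a (Finset.mem_insert_self a t))
        (suppIn_prod fun i hi => hs i (Finset.mem_insert_of_mem hi)),
      ih (fun i hi => hc i (Finset.mem_insert_of_mem hi))
        (fun i hi => hs i (Finset.mem_insert_of_mem hi))]
    have h1 : MvPowerSeries.coeff (R := R) 0 (u a) = 1 := by
      rw [MvPowerSeries.coeff_zero_eq_constantCoeff_apply,
        hc a (Finset.mem_insert_self a t)]
    have h2 : MvPowerSeries.coeff (R := R) 0 (∏ i ∈ t, u i) = 1 := by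
      rw [MvPowerSeries.coeff_zero_eq_constantCoeff_apply, map_prod]
      exact Finset.prod_eq_one fun i hi => hc i (Finset.mem_insert_of_mem hi)
    rw [h1, h2, one_mul, mul_one, add_comm]

theorem coeff_lam_pow {lam : σ →₀ ℕ} (hlam : lam ≠ 0) {g : MvPowerSeries σ R}
    (hc : MvPowerSeries.constantCoeff (σ := σ) (R := R) g = 1)
    (hs : SuppIn (AddSubmonoid.closure {lam}) g) (k : ℕ) :
    MvPowerSeries.coeff (R := R) lam (g ^ k) = k • MvPowerSeries.coeff (R := R) lam g := by
  rw [show g ^ k = ∏ _i ∈ Finset.range k, g by rw [Finset.prod_const, Finset.card_range]]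
  rw [coeff_lam_prod hlam _ _ (fun _ _ => hc) (fun _ _ => hs)]
  simp

theorem coeff_lam_invOfUnit {lam : σ →₀ ℕ} (hlam : lam ≠ 0) (p : R) :
    MvPowerSeries.coeff (R := R) lam
      (MvPowerSeries.invOfUnit (1 - MvPowerSeries.monomial (R := R) lam p) 1) = p := by
  classical
  have hg : MvPowerSeries.constantCoeff (σ := σ) (R := R) (1 - MvPowerSeries.monomial (R := R) lam p) = 1 :=
    constCoeff_factor hlam p
  have hmul := MvPowerSeries.mul_invOfUnit (1 - MvPowerSeries.monomial (R := R) lam p) 1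
    (by rw [hg, Units.val_one])
  have := congrArg (MvPowerSeries.coeff (R := R) lam) hmul
  rw [coeff_mul_of_suppIn_closure hlam (suppIn_factor lam p)
      (suppIn_invOfUnit (suppIn_factor lam p) 1),
    MvPowerSeries.coeff_one, if_neg hlam,
    MvPowerSeries.coeff_zero_eq_constantCoeff_apply, hg, one_mul,
    coeff_lam_factor hlam,
    MvPowerSeries.coeff_zero_eq_constantCoeff_apply,
    MvPowerSeries.constantCoeff_invOfUnit] at this
  simp only [inv_one, Units.val_one, mul_one] at this
  linear_combination this

theorem coeff_lam_zpowSeries {lam : σ →₀ ℕ} (hlam : lam ≠ 0) (p : R) (z : ℤ) :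
    MvPowerSeries.coeff (R := R) lam
      (zpowSeries (1 - MvPowerSeries.monomial (R := R) lam p) z) = -(z • p) := by
  have hc := constCoeff_factor (R := R) hlam p
  have hs := suppIn_factor (R := R) lam p
  unfold zpowSeries
  split_ifs with h
  · rw [coeff_lam_pow hlam hc hs, coeff_lam_factor hlam, smul_neg]
    congr 1
    conv_rhs => rw [show z = ((z.toNat : ℕ) : ℤ) by omega]
    rw [natCast_zsmul]
  · have hc' : MvPowerSeries.constantCoeff (σ := σ) (R := R)
        (MvPowerSeries.invOfUnit (1 - MvPowerSeries.monomial (R := R) lam p) 1) = 1 := by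
      rw [MvPowerSeries.constantCoeff_invOfUnit]; simp
    rw [coeff_lam_pow hlam hc' (suppIn_invOfUnit hs 1), coeff_lam_invOfUnit hlam,
      ← neg_zsmul]
    conv_lhs => rw [show ((-z).toNat : ℕ) • p = (((-z).toNat : ℤ)) • p from
      (natCast_zsmul p (-z).toNat).symm]
    congr 1
    omega

end Factor

theorem suppIn_mono {σ : Type*} {R : Type*} [CommRing R]
    {M M' : AddSubmonoid (σ →₀ ℕ)} (h : M ≤ M') {g : MvPowerSeries σ R}
    (hg : SuppIn M g) : SuppIn M' g :=
  fun d hd => hg d fun hdm => hd (h hdm)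

open Classical in
/-- If `f ∈ MvPowerSeries σ ℤ[t]` has constant coefficient `1` and is supported on an
additive submonoid `S` of exponent vectors, then its product-form exponent family `m`
(the unique family with `f = ∏_{λ ≠ 0} ∏_{n ≥ 0} (1 - tⁿX^λ)^{m(λ,n)}` coefficientwise)
vanishes outside `S`: `m λ = 0` for every `λ ∉ S`. -/
theorem stmt_4 (σ : Type*) [Fintype σ] (S : AddSubmonoid (σ →₀ ℕ))
    (f : MvPowerSeries σ (Polynomial ℤ))
    (hf : MvPowerSeries.constantCoeff (σ := σ) (R := Polynomial ℤ) f = 1)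
    (hsupp : ∀ d : σ →₀ ℕ, d ∉ S → MvPowerSeries.coeff (R := Polynomial ℤ) d f = 0)
    (m : (σ →₀ ℕ) → (ℕ →₀ ℤ)) (hm0 : m 0 = 0)
    (hm : ∀ d : σ →₀ ℕ, MvPowerSeries.coeff (R := Polynomial ℤ) d f =
      MvPowerSeries.coeff (R := Polynomial ℤ) d
        (∏ lam ∈ (Finset.Iic d).erase 0, ∏ n ∈ (m lam).support,
          zpowSeries (1 - MvPowerSeries.monomial (R := Polynomial ℤ) lam (Polynomial.X ^ n))
            (m lam n))) :
    ∀ lam : σ →₀ ℕ, lam ∉ S → m lam = 0 := by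
  intro lam
  induction lam using WellFoundedLT.induction with
  | _ lam ih =>
  intro hlam
  have hlam0 : lam ≠ 0 := by rintro rfl; exact hlam S.zero_mem
  set F : (σ →₀ ℕ) → MvPowerSeries σ (Polynomial ℤ) := fun l =>
    ∏ n ∈ (m l).support,
      zpowSeries (1 - MvPowerSeries.monomial (R := Polynomial ℤ) l (Polynomial.X ^ n)) (m l n)
    with hF
  have hFc : ∀ l : σ →₀ ℕ, l ≠ 0 →
      MvPowerSeries.constantCoeff (σ := σ) (R := Polynomial ℤ) (F l) = 1 := by
    intro l hl
    rw [hF]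
    simp only [map_prod]
    exact Finset.prod_eq_one fun n _ =>
      constCoeff_zpowSeries (constCoeff_factor hl _) _
  have hFs : ∀ l : σ →₀ ℕ, SuppIn (AddSubmonoid.closure {l}) (F l) := fun l =>
    suppIn_prod fun n _ => suppIn_zpowSeries (suppIn_factor l _) _
  have hmem : lam ∈ (Finset.Iic lam).erase 0 :=
    Finset.mem_erase.2 ⟨hlam0, Finset.mem_Iic.2 le_rfl⟩
  have hprod := hm lam
  rw [show ((Finset.Iic lam).erase 0).prod F =
      F lam * ∏ l ∈ ((Finset.Iic lam).erase 0).erase lam, F l from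
    (Finset.mul_prod_erase _ F hmem).symm] at hprod
  set A := ∏ l ∈ ((Finset.Iic lam).erase 0).erase lam, F l with hA
  have hAs : SuppIn S A := by
    refine suppIn_prod fun l hl => ?_
    rw [Finset.mem_erase, Finset.mem_erase, Finset.mem_Iic] at hl
    obtain ⟨hll, hl0, hle⟩ := hl
    by_cases hlS : l ∈ S
    · exact suppIn_mono (AddSubmonoid.closure_le.2 (by simpa using hlS)) (hFs l)
    · have hml : m l = 0 := ih l (lt_of_le_of_ne hle hll) hlS
      have : F l = 1 := by rw [hF]; simp [hml]
      rw [this]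
      exact suppIn_one S
  have hA0 : MvPowerSeries.coeff (R := Polynomial ℤ) 0 A = 1 := by
    rw [MvPowerSeries.coeff_zero_eq_constantCoeff_apply, hA, map_prod]
    refine Finset.prod_eq_one fun l hl => ?_
    rw [Finset.mem_erase, Finset.mem_erase] at hl
    exact hFc l hl.2.1
  have hco : MvPowerSeries.coeff (R := Polynomial ℤ) lam (F lam * A) =
      MvPowerSeries.coeff (R := Polynomial ℤ) lam (F lam) := by
    classical
    rw [MvPowerSeries.coeff_mul]
    rw [Finset.sum_eq_single_of_mem (lam, (0 : σ →₀ ℕ))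
      (Finset.HasAntidiagonal.mem_antidiagonal.2 (add_zero lam)) ?_]
    · rw [hA0, mul_one]
    · intro p hp hnp
      rw [Finset.HasAntidiagonal.mem_antidiagonal] at hp
      by_cases h1 : p.1 ∈ AddSubmonoid.closure ({lam} : Set (σ →₀ ℕ))
      · by_cases h2 : p.2 ∈ S
        · exfalso
          obtain ⟨j, hj⟩ := AddSubmonoid.mem_closure_singleton.1 h1
          rcases Nat.eq_zero_or_pos j with rfl | hjpos
          · rw [zero_smul] at hj
            rw [← hj, zero_add] at hp
            exact hlam (hp ▸ h2)
          · obtain ⟨i, hi⟩ : ∃ i, lam i ≠ 0 := by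
              by_contra hc
              push_neg at hc
              exact hlam0 (Finsupp.ext hc)
            have hco : j * lam i + p.2 i = lam i := by
              have := congrArg (fun v => v i) (hj ▸ hp)
              simpa [Finsupp.smul_apply] using this
            have hj1 : j = 1 := by nlinarith [Nat.pos_of_ne_zero hi]
            rw [hj1, one_smul] at hj
            rw [← hj] at hp
            have hp2 : p.2 = 0 := by
              have := congrArg (fun v => v - p.1) hp
              exact add_eq_left.mp hp
            exact hnp (Prod.ext hj.symm hp2)
        · rw [hAs _ h2, mul_zero]
      · rw [hFs lam _ h1, zero_mul]
  have hzero : (0 : Polynomial ℤ) =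
      ∑ n ∈ (m lam).support, -((m lam n) • (Polynomial.X ^ n : Polynomial ℤ)) := by
    have h1 : MvPowerSeries.coeff (R := Polynomial ℤ) lam f = 0 := hsupp lam hlam
    rw [h1] at hprod
    rw [hco] at hprod
    rw [hF] at hprod
    rw [coeff_lam_prod hlam0 _ _
      (fun n _ => constCoeff_zpowSeries (constCoeff_factor hlam0 _) _)
      (fun n _ => suppIn_zpowSeries (suppIn_factor lam _) _)] at hprod
    rw [hprod]
    exact Finset.sum_congr rfl fun n _ => coeff_lam_zpowSeries hlam0 _ _
  ext n
  by_cases hn : n ∈ (m lam).support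
  · have h1 := congrArg (fun q => Polynomial.coeff q n) hzero
    simp only [Polynomial.coeff_zero, Polynomial.finset_sum_coeff,
      Polynomial.coeff_neg, Polynomial.coeff_smul, Polynomial.coeff_X_pow,
      smul_eq_mul, mul_ite, mul_one, mul_zero] at h1
    rw [Finset.sum_neg_distrib, Finset.sum_ite_eq, if_pos hn] at h1
    simp only [Finsupp.coe_zero, Pi.zero_apply, Finsupp.zero_apply]
    omega
  · simpa [Finsupp.notMem_support_iff] using hn
end

section
/- Let σ be a finite type, S an additive submonoid of ℕ^σ, and let f ∈ MvPowerSeries σ ℤ[t] have constant coefficient 1. Then there exists a unique function m assigning to each nonzero λ ∈ S a finitely supported function m(λ,·) : ℕ → ℤ such that the power series h defined coefficientwise by: (coefficient of X^d in h) = (coefficient of X^d in f · ∏_{λ ∈ S, 0 ≠ λ ≤ d} ∏_{n ∈ supp m(λ,·)} (1 − tⁿX^λ)^{m(λ,n)}) satisfies: the coefficient of h at 0 is 1 and the coefficient of h at every nonzero d ∈ S is 0. (Negative integer powers are interpreted via inverses in the power series ring.) -/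
namespace PetAux

open MvPowerSeries Finset

variable {σ : Type*}

/-- total degree of an exponent vector -/
def deg (d : σ →₀ ℕ) : ℕ := d.sum fun _ n => n

lemma deg_eq_sum (d : σ →₀ ℕ) : deg d = ∑ i ∈ d.support, d i := rfl

lemma eq_zero_of_deg_eq_zero {d : σ →₀ ℕ} (h : deg d = 0) : d = 0 := by
  ext i
  simp only [Finsupp.coe_zero, Pi.zero_apply]
  by_contra hi
  have hmem : i ∈ d.support := Finsupp.mem_support_iff.2 hi
  have := Finset.single_le_sum (f := fun i => d i) (fun _ _ => Nat.zero_le _) hmem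
  rw [← deg_eq_sum, h] at this
  exact hi (Nat.le_zero.mp this)

lemma deg_lt_of_lt {a b : σ →₀ ℕ} (hab : a ≤ b) (hne : a ≠ b) : deg a < deg b := by
  have hsub : a.support ⊆ b.support := by
    intro i hi
    rw [Finsupp.mem_support_iff] at hi ⊢
    have := Finsupp.le_def.1 hab i
    omega
  have hsum : deg a = ∑ i ∈ b.support, a i := by
    rw [deg_eq_sum]
    exact Finset.sum_subset hsub (fun i _ hi => by
      simpa [Finsupp.mem_support_iff, not_not] using hi)
  obtain ⟨j, hj⟩ : ∃ j, a j ≠ b j := by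
    by_contra h
    push_neg at h
    exact hne (Finsupp.ext h)
  have hjlt : a j < b j := lt_of_le_of_ne (Finsupp.le_def.1 hab j) hj
  have hjmem : j ∈ b.support := Finsupp.mem_support_iff.2 (by omega)
  rw [hsum, deg_eq_sum]
  exact Finset.sum_lt_sum (fun i _ => Finsupp.le_def.1 hab i) ⟨j, hjmem, hjlt⟩


section SuppOn

variable {R : Type*} [CommRing R]

/-- a power series is supported on an additive submonoid of exponents -/
def SuppOn (T : AddSubmonoid (σ →₀ ℕ)) (f : MvPowerSeries σ R) : Prop :=
  ∀ d, d ∉ T → MvPowerSeries.coeff d f = 0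

lemma suppOn_one (T : AddSubmonoid (σ →₀ ℕ)) : SuppOn T (1 : MvPowerSeries σ R) := by
  classical
  intro d hd
  rw [MvPowerSeries.coeff_one, if_neg]
  rintro rfl
  exact hd T.zero_mem

lemma suppOn_mul {T : AddSubmonoid (σ →₀ ℕ)} {f g : MvPowerSeries σ R}
    (hf : SuppOn T f) (hg : SuppOn T g) : SuppOn T (f * g) := by
  classical
  intro d hd
  rw [MvPowerSeries.coeff_mul]
  refine Finset.sum_eq_zero fun p hp => ?_
  rw [Finset.HasAntidiagonal.mem_antidiagonal] at hp
  by_cases h1 : p.1 ∈ T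
  · have h2 : p.2 ∉ T := fun h2 => hd (hp ▸ T.add_mem h1 h2)
    rw [hg p.2 h2, mul_zero]
  · rw [hf p.1 h1, zero_mul]

lemma suppOn_pow {T : AddSubmonoid (σ →₀ ℕ)} {f : MvPowerSeries σ R}
    (hf : SuppOn T f) (n : ℕ) : SuppOn T (f ^ n) := by
  induction n with
  | zero => simpa using suppOn_one T
  | succ n ih => rw [pow_succ]; exact suppOn_mul ih hf

lemma suppOn_prod {T : AddSubmonoid (σ →₀ ℕ)} {ι : Type*} {s : Finset ι}
    {F : ι → MvPowerSeries σ R} (hF : ∀ i ∈ s, SuppOn T (F i)) :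
    SuppOn T (∏ i ∈ s, F i) := by
  classical
  induction s using Finset.induction_on with
  | empty => simpa using suppOn_one T
  | insert _ _ hni ih =>
    rw [Finset.prod_insert hni]
    exact suppOn_mul (hF _ (Finset.mem_insert_self _ _))
      (ih fun i hi => hF i (Finset.mem_insert_of_mem hi))

lemma suppOn_invOfUnit {T : AddSubmonoid (σ →₀ ℕ)} {f : MvPowerSeries σ R}
    (hf : SuppOn T f) (u : Rˣ) : SuppOn T (MvPowerSeries.invOfUnit f u) := by
  classical
  suffices h : ∀ N d, deg d ≤ N → d ∉ T →
      MvPowerSeries.coeff d (MvPowerSeries.invOfUnit f u) = 0 by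
    intro d hd; exact h (deg d) d le_rfl hd
  intro N
  induction N with
  | zero =>
    intro d hd0 hd
    exact absurd (eq_zero_of_deg_eq_zero (Nat.le_zero.mp hd0) ▸ T.zero_mem) hd
  | succ N ih =>
    intro d hdN hd
    have hd0 : d ≠ 0 := fun h => hd (h ▸ T.zero_mem)
    rw [MvPowerSeries.coeff_invOfUnit, if_neg hd0]
    rw [Finset.sum_eq_zero, mul_zero]
    intro p hp
    rw [Finset.HasAntidiagonal.mem_antidiagonal] at hp
    split_ifs with h2
    · by_cases h1 : p.1 ∈ T
      · have hp2 : p.2 ∉ T := fun hh => hd (hp ▸ T.add_mem h1 hh)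
        have hdeg : deg p.2 ≤ N := by
          have := deg_lt_of_lt (le_of_lt h2) (ne_of_lt h2)
          omega
        rw [ih p.2 hdeg hp2, mul_zero]
      · rw [hf p.1 h1, zero_mul]
    · rfl

lemma suppOn_zpowSeries {T : AddSubmonoid (σ →₀ ℕ)} {f : MvPowerSeries σ R}
    (hf : SuppOn T f) (k : ℤ) : SuppOn T (zpowSeries f k) := by
  rw [zpowSeries]
  split_ifs
  · exact suppOn_pow hf _
  · exact suppOn_pow (suppOn_invOfUnit hf 1) _

end SuppOn


section Coeffs

variable {R : Type*} [CommRing R]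

lemma mem_multiples_le {lam b : σ →₀ ℕ} (hlam : lam ≠ 0)
    (hb : b ∈ AddSubmonoid.multiples lam) (hble : b ≤ lam) : b = 0 ∨ b = lam := by
  obtain ⟨k, rfl⟩ := hb
  match k with
  | 0 => exact Or.inl (zero_smul ℕ lam)
  | (k+1) =>
    refine Or.inr (le_antisymm hble ?_)
    rw [Finsupp.le_def]
    intro i
    rw [Finsupp.smul_apply, smul_eq_mul]
    exact Nat.le_mul_of_pos_left _ (Nat.succ_pos k)

lemma self_mem_multiples {lam : σ →₀ ℕ} : lam ∈ AddSubmonoid.multiples lam :=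
  ⟨1, one_smul ℕ lam⟩

/-- key coefficient formula: if `F` is supported on multiples of `d ≠ 0` then the
coefficient of `g * F` at `d` only sees the extreme splittings. -/
lemma coeff_mul_of_suppOn {d : σ →₀ ℕ} (hd : d ≠ 0) (g F : MvPowerSeries σ R)
    (hF : SuppOn (AddSubmonoid.multiples d) F) :
    MvPowerSeries.coeff d (g * F) =
      MvPowerSeries.coeff d g * MvPowerSeries.constantCoeff F +
      MvPowerSeries.constantCoeff g * MvPowerSeries.coeff d F := by
  classical
  rw [MvPowerSeries.coeff_mul]
  have hsub : ({(d, 0), (0, d)} : Finset ((σ →₀ ℕ) × (σ →₀ ℕ))) ⊆ Finset.HasAntidiagonal.antidiagonal d := by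
    intro p hp
    rw [Finset.mem_insert, Finset.mem_singleton] at hp
    rcases hp with rfl | rfl <;> simp [Finset.HasAntidiagonal.mem_antidiagonal]
  rw [← Finset.sum_subset hsub]
  · rw [Finset.sum_insert (by simp [Prod.ext_iff, hd, Ne.symm hd]), Finset.sum_singleton]
    simp only [MvPowerSeries.coeff_zero_eq_constantCoeff]
  · intro p hp hnp
    rw [Finset.HasAntidiagonal.mem_antidiagonal] at hp
    rw [Finset.mem_insert, Finset.mem_singleton] at hnp
    push_neg at hnp
    by_cases h2 : p.2 ∈ AddSubmonoid.multiples d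
    · have hle : p.2 ≤ d := hp ▸ le_add_self
      rcases mem_multiples_le hd h2 hle with h | h
      · exfalso
        apply hnp.1
        have : p.1 = d := by rw [← hp, h, add_zero]
        exact Prod.ext this h
      · exfalso
        apply hnp.2
        have hp1 : p.1 = 0 := by
          have := hp
          rw [h] at this
          exact (add_eq_right).1 this
        exact Prod.ext hp1 h
    · rw [hF p.2 h2, mul_zero]

lemma constantCoeff_one_sub_monomial {lam : σ →₀ ℕ} (hlam : lam ≠ 0) (c : R) :
    MvPowerSeries.constantCoeff (1 - MvPowerSeries.monomial lam c) = 1 := by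
  classical
  rw [map_sub, map_one, ← MvPowerSeries.coeff_zero_eq_constantCoeff_apply,
    MvPowerSeries.coeff_monomial, if_neg (Ne.symm hlam), sub_zero]

lemma constantCoeff_zpowSeries {f : MvPowerSeries σ R}
    (hf : MvPowerSeries.constantCoeff f = 1) (k : ℤ) :
    MvPowerSeries.constantCoeff (zpowSeries f k) = 1 := by
  rw [zpowSeries]
  split_ifs
  · rw [map_pow, hf, one_pow]
  · rw [map_pow, MvPowerSeries.constantCoeff_invOfUnit]
    norm_num

lemma suppOn_one_sub_monomial (lam : σ →₀ ℕ) (c : R) :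
    SuppOn (AddSubmonoid.multiples lam) (1 - MvPowerSeries.monomial lam c) := by
  classical
  intro d hd
  rw [map_sub, MvPowerSeries.coeff_one, MvPowerSeries.coeff_monomial,
    if_neg, if_neg, sub_zero]
  · rintro rfl; exact hd self_mem_multiples
  · rintro rfl; exact hd (AddSubmonoid.multiples lam).zero_mem

lemma coeff_self_one_sub_monomial {d : σ →₀ ℕ} (hd : d ≠ 0) (c : R) :
    MvPowerSeries.coeff d (1 - MvPowerSeries.monomial d c) = -c := by
  classical
  rw [map_sub, MvPowerSeries.coeff_one, if_neg hd, MvPowerSeries.coeff_monomial_same, zero_sub]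

lemma coeff_self_pow {d : σ →₀ ℕ} (hd : d ≠ 0) {G : MvPowerSeries σ R}
    (hG : SuppOn (AddSubmonoid.multiples d) G)
    (hG1 : MvPowerSeries.constantCoeff G = 1) (j : ℕ) :
    MvPowerSeries.coeff d (G ^ j) = j • MvPowerSeries.coeff d G := by
  classical
  induction j with
  | zero => rw [pow_zero, MvPowerSeries.coeff_one, if_neg hd, zero_smul]
  | succ j ih =>
    rw [pow_succ, coeff_mul_of_suppOn hd _ _ hG, ih, hG1, map_pow, hG1, one_pow, mul_one,
      one_mul, succ_nsmul]

lemma coeff_self_invOfUnit {d : σ →₀ ℕ} (hd : d ≠ 0) {G : MvPowerSeries σ R}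
    (hG : SuppOn (AddSubmonoid.multiples d) G)
    (hG1 : MvPowerSeries.constantCoeff G = 1) :
    MvPowerSeries.coeff d (MvPowerSeries.invOfUnit G 1) = -MvPowerSeries.coeff d G := by
  have hmul : G * MvPowerSeries.invOfUnit G 1 = 1 :=
    MvPowerSeries.mul_invOfUnit G 1 (by rw [hG1]; rfl)
  have := congrArg (MvPowerSeries.coeff d) hmul
  classical
  rw [coeff_mul_of_suppOn hd _ _ (suppOn_invOfUnit hG 1), MvPowerSeries.coeff_one, if_neg hd,
    MvPowerSeries.constantCoeff_invOfUnit, hG1] at this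
  simp only [Units.val_one, inv_one, mul_one, one_mul] at this
  linear_combination this

lemma coeff_self_zpowSeries {d : σ →₀ ℕ} (hd : d ≠ 0) {G : MvPowerSeries σ R}
    (hG : SuppOn (AddSubmonoid.multiples d) G)
    (hG1 : MvPowerSeries.constantCoeff G = 1) (k : ℤ) :
    MvPowerSeries.coeff d (zpowSeries G k) = k • MvPowerSeries.coeff d G := by
  rw [zpowSeries]
  split_ifs with h
  · rw [coeff_self_pow hd hG hG1, ← natCast_zsmul, Int.toNat_of_nonneg h]
  · rw [coeff_self_pow hd (suppOn_invOfUnit hG 1)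
      (by rw [MvPowerSeries.constantCoeff_invOfUnit]; norm_num),
      coeff_self_invOfUnit hd hG hG1, ← natCast_zsmul, Int.toNat_of_nonneg (by omega),
      smul_neg, ← neg_smul, neg_neg]

lemma coeff_self_prod {ι : Type*} {d : σ →₀ ℕ} (hd : d ≠ 0) (s : Finset ι)
    (G : ι → MvPowerSeries σ R)
    (hs : ∀ i ∈ s, SuppOn (AddSubmonoid.multiples d) (G i))
    (h1 : ∀ i ∈ s, MvPowerSeries.constantCoeff (G i) = 1) :
    MvPowerSeries.coeff d (∏ i ∈ s, G i) = ∑ i ∈ s, MvPowerSeries.coeff d (G i) := by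
  classical
  induction s using Finset.induction_on with
  | empty => simp [MvPowerSeries.coeff_one, if_neg hd]
  | insert a t hni ih =>
    rw [Finset.prod_insert hni, Finset.sum_insert hni, mul_comm,
      coeff_mul_of_suppOn hd _ _ (hs a (Finset.mem_insert_self _ _)),
      h1 a (Finset.mem_insert_self _ _),
      ih (fun i hi => hs i (Finset.mem_insert_of_mem hi))
        (fun i hi => h1 i (Finset.mem_insert_of_mem hi))]
    have : MvPowerSeries.constantCoeff (∏ i ∈ t, G i) = 1 := by
      rw [map_prod]
      exact Finset.prod_eq_one fun i hi => h1 i (Finset.mem_insert_of_mem hi)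
    rw [this, one_mul, mul_one, add_comm]

end Coeffs


section Mfac

/-- the product factor attached to an exponent `lam` and multiplicities `m` -/
noncomputable def Mfac (lam : σ →₀ ℕ) (m : ℕ →₀ ℤ) : MvPowerSeries σ (Polynomial ℤ) :=
  ∏ n ∈ m.support,
    zpowSeries (1 - MvPowerSeries.monomial lam (Polynomial.X ^ n)) (m n)

/-- a finsupp `ℕ →₀ ℤ`, read as a polynomial -/
def P (m : ℕ →₀ ℤ) : Polynomial ℤ := ⟨AddMonoidAlgebra.ofCoeff m⟩

@[simp] lemma P_toFinsupp (q : Polynomial ℤ) : P q.toFinsupp.coeff = q := Polynomial.eta q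

@[simp] lemma toFinsupp_P (m : ℕ →₀ ℤ) : (P m).toFinsupp.coeff = m := rfl

lemma P_coeff (m : ℕ →₀ ℤ) (n : ℕ) : (P m).coeff n = m n := rfl

lemma P_support (m : ℕ →₀ ℤ) : (P m).support = m.support := rfl

lemma sum_smul_X_pow (m : ℕ →₀ ℤ) :
    ∑ n ∈ m.support, m n • (Polynomial.X : Polynomial ℤ) ^ n = P m := by
  apply Polynomial.ext
  intro k
  rw [Polynomial.finset_sum_coeff, P_coeff]
  have : ∀ n ∈ m.support, (m n • (Polynomial.X : Polynomial ℤ) ^ n).coeff k =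
      if n = k then m n else 0 := by
    intro n _
    rw [Polynomial.coeff_smul, Polynomial.coeff_X_pow]
    by_cases h : k = n <;> simp [h, eq_comm]
  rw [Finset.sum_congr rfl this, Finset.sum_ite_eq' m.support k (fun n => m n)]
  by_cases hk : k ∈ m.support
  · rw [if_pos hk]
  · rw [if_neg hk, eq_comm]
    exact Finsupp.notMem_support_iff.1 hk

lemma constantCoeff_Mfac {lam : σ →₀ ℕ} (hlam : lam ≠ 0) (m : ℕ →₀ ℤ) :
    MvPowerSeries.constantCoeff (Mfac lam m) = 1 := by
  rw [Mfac, map_prod]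
  exact Finset.prod_eq_one fun n _ =>
    constantCoeff_zpowSeries (constantCoeff_one_sub_monomial hlam _) _

lemma suppOn_Mfac (lam : σ →₀ ℕ) (m : ℕ →₀ ℤ) :
    SuppOn (AddSubmonoid.multiples lam) (Mfac lam m) :=
  suppOn_prod fun n _ => suppOn_zpowSeries (suppOn_one_sub_monomial lam _) _

lemma coeff_self_Mfac {d : σ →₀ ℕ} (hd : d ≠ 0) (m : ℕ →₀ ℤ) :
    MvPowerSeries.coeff d (Mfac d m) = -(P m) := by
  rw [Mfac, coeff_self_prod hd _ _
    (fun n _ => suppOn_zpowSeries (suppOn_one_sub_monomial d _) _)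
    (fun n _ => constantCoeff_zpowSeries (constantCoeff_one_sub_monomial hd _) _)]
  have : ∀ n ∈ m.support,
      MvPowerSeries.coeff d
        (zpowSeries (1 - MvPowerSeries.monomial d (Polynomial.X ^ n)) (m n))
      = -(m n • (Polynomial.X : Polynomial ℤ) ^ n) := by
    intro n _
    rw [coeff_self_zpowSeries hd (suppOn_one_sub_monomial d _)
      (constantCoeff_one_sub_monomial hd _), coeff_self_one_sub_monomial hd, smul_neg]
  rw [Finset.sum_congr rfl this, Finset.sum_neg_distrib, sum_smul_X_pow]

lemma coeff_mul_Mfac {d : σ →₀ ℕ} (hd : d ≠ 0) (g : MvPowerSeries σ (Polynomial ℤ))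
    (m : ℕ →₀ ℤ) :
    MvPowerSeries.coeff d (g * Mfac d m) =
      MvPowerSeries.coeff d g -
        MvPowerSeries.constantCoeff g * P m := by
  rw [coeff_mul_of_suppOn hd _ _ (suppOn_Mfac d m), constantCoeff_Mfac hd,
    coeff_self_Mfac hd, mul_one, mul_neg, sub_eq_add_neg]

open Classical in
/-- splitting off the top factor of the Peterson product -/
lemma coeff_mul_prod_split [DecidableEq (σ →₀ ℕ)] {g : MvPowerSeries σ (Polynomial ℤ)}
    (hg : MvPowerSeries.constantCoeff g = 1)
    (m : (σ →₀ ℕ) → (ℕ →₀ ℤ)) {d : σ →₀ ℕ} (hd : d ≠ 0) :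
    MvPowerSeries.coeff d
        (g * ∏ lam ∈ (Finset.Iic d).erase 0, Mfac lam (m lam)) =
      MvPowerSeries.coeff d
        (g * ∏ lam ∈ ((Finset.Iic d).erase 0).erase d, Mfac lam (m lam)) - P (m d) := by
  have hdmem : d ∈ (Finset.Iic d).erase 0 :=
    Finset.mem_erase.2 ⟨hd, Finset.mem_Iic.2 le_rfl⟩
  rw [← Finset.mul_prod_erase _ _ hdmem]
  rw [show g * (Mfac d (m d) * ∏ lam ∈ ((Finset.Iic d).erase 0).erase d, Mfac lam (m lam)) =
      (g * ∏ lam ∈ ((Finset.Iic d).erase 0).erase d, Mfac lam (m lam)) * Mfac d (m d) by ring]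
  rw [coeff_mul_Mfac hd]
  have hcc : MvPowerSeries.constantCoeff
      (g * ∏ lam ∈ ((Finset.Iic d).erase 0).erase d, Mfac lam (m lam)) = 1 := by
    rw [map_mul, hg, one_mul, map_prod]
    refine Finset.prod_eq_one fun lam hlam => ?_
    have : lam ≠ 0 := (Finset.mem_erase.1 (Finset.mem_erase.1 hlam).2).1
    exact constantCoeff_Mfac this _
  rw [hcc, one_mul]

end Mfac


section Pet

variable [Fintype σ] [DecidableEq (σ →₀ ℕ)]

open Classical in
/-- the Peterson multiplicities, defined by well-founded recursion on the degree -/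
noncomputable def pet (f : MvPowerSeries σ (Polynomial ℤ)) (S : AddSubmonoid (σ →₀ ℕ)) :
    (σ →₀ ℕ) → (ℕ →₀ ℤ)
  | d =>
    if d ∈ S ∧ d ≠ 0 then
      (MvPowerSeries.coeff d
        (f * ∏ lam ∈ (((Finset.Iic d).erase 0).erase d).attach,
          Mfac lam.1 (pet f S lam.1))).toFinsupp.coeff
    else 0
termination_by d => deg d
decreasing_by
  have hmem := lam.2
  have h1 := Finset.mem_erase.1 hmem
  have h2 := Finset.mem_erase.1 h1.2
  exact deg_lt_of_lt (Finset.mem_Iic.1 h2.2) h1.1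

lemma pet_eq_zero (f : MvPowerSeries σ (Polynomial ℤ)) (S : AddSubmonoid (σ →₀ ℕ))
    (d : σ →₀ ℕ) (hd : ¬(d ∈ S ∧ d ≠ 0)) : pet f S d = 0 := by
  rw [pet, if_neg hd]

open Classical in
lemma pet_spec (f : MvPowerSeries σ (Polynomial ℤ)) (S : AddSubmonoid (σ →₀ ℕ))
    (d : σ →₀ ℕ) (hd : d ∈ S ∧ d ≠ 0) :
    pet f S d = (MvPowerSeries.coeff d
      (f * ∏ lam ∈ ((Finset.Iic d).erase 0).erase d, Mfac lam (pet f S lam))).toFinsupp.coeff := by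
  rw [pet, if_pos hd,
    Finset.prod_attach (((Finset.Iic d).erase 0).erase d) (fun lam => Mfac lam (pet f S lam))]

end Pet

end PetAux


open Classical in
/-- **Correctness of the generalized Peterson algorithm** (§5): for `f ∈ MvPowerSeries σ ℤ[t]`
with constant coefficient `1` and an additive submonoid `S` of exponent vectors, there is a
unique family `m` assigning to each nonzero `λ ∈ S` a finitely supported `m λ : ℕ →₀ ℤ`
(normalized to vanish at `λ = 0` and outside `S`) such that the series `h` defined
coefficientwise by `coeff d h = coeff d (f · ∏_{0 ≠ λ ≤ d} ∏_{n} (1 - tⁿX^λ)^{m(λ,n)})`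
satisfies `coeff 0 h = 1` and `coeff d h = 0` for all nonzero `d ∈ S`.
(Since `m` vanishes off `S`, the product is effectively over `λ ∈ S`, `0 ≠ λ ≤ d`.) -/
theorem stmt_5 (σ : Type*) [Fintype σ] (S : AddSubmonoid (σ →₀ ℕ))
    (f : MvPowerSeries σ (Polynomial ℤ))
    (hf : MvPowerSeries.constantCoeff f = 1) :
    ∃! m : (σ →₀ ℕ) → (ℕ →₀ ℤ),
      m 0 = 0 ∧
      (∀ lam : σ →₀ ℕ, lam ∉ S → m lam = 0) ∧
      MvPowerSeries.coeff 0
        (f * ∏ lam ∈ (Finset.Iic (0 : σ →₀ ℕ)).erase 0, ∏ n ∈ (m lam).support,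
          zpowSeries (1 - MvPowerSeries.monomial lam (Polynomial.X ^ n))
            (m lam n)) = 1 ∧
      (∀ d : σ →₀ ℕ, d ∈ S → d ≠ 0 →
        MvPowerSeries.coeff d
          (f * ∏ lam ∈ (Finset.Iic d).erase 0, ∏ n ∈ (m lam).support,
            zpowSeries (1 - MvPowerSeries.monomial lam (Polynomial.X ^ n))
              (m lam n)) = 0) := by
  open PetAux in
  have hM : ∀ (m : (σ →₀ ℕ) → (ℕ →₀ ℤ)) (s : Finset (σ →₀ ℕ)),
      (∏ lam ∈ s, ∏ n ∈ (m lam).support,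
        zpowSeries (1 - MvPowerSeries.monomial lam (Polynomial.X ^ n))
          (m lam n)) = ∏ lam ∈ s, PetAux.Mfac lam (m lam) := fun _ _ => rfl
  have hIic0 : ((Finset.Iic (0 : σ →₀ ℕ)).erase 0) = ∅ := by
    refine Finset.eq_empty_iff_forall_notMem.2 fun x hx => ?_
    obtain ⟨hne, hle⟩ := Finset.mem_erase.1 hx
    exact hne (nonpos_iff_eq_zero.1 (Finset.mem_Iic.1 hle))
  refine ⟨PetAux.pet f S, ⟨?_, ?_, ?_, ?_⟩, ?_⟩
  · exact PetAux.pet_eq_zero f S 0 (by simp)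
  · exact fun lam hlam => PetAux.pet_eq_zero f S lam (by tauto)
  · rw [hM, hIic0, Finset.prod_empty, mul_one,
      MvPowerSeries.coeff_zero_eq_constantCoeff_apply, hf]
  · intro d hdS hd0
    rw [hM, PetAux.coeff_mul_prod_split hf (PetAux.pet f S) hd0,
      PetAux.pet_spec f S d ⟨hdS, hd0⟩, PetAux.P_toFinsupp, sub_self]
  · rintro m' ⟨h0, hSm, -, h4⟩
    have key : ∀ N d, PetAux.deg d ≤ N → m' d = PetAux.pet f S d := by
      intro N
      induction N with
      | zero =>
        intro d hdN
        have hd : d = 0 := PetAux.eq_zero_of_deg_eq_zero (Nat.le_zero.mp hdN)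
        subst hd
        rw [h0, PetAux.pet_eq_zero f S 0 (by simp)]
      | succ N ih =>
        intro d hdN
        by_cases hd0 : d = 0
        · subst hd0; rw [h0, PetAux.pet_eq_zero f S 0 (by simp)]
        by_cases hdS : d ∈ S
        · have h := h4 d hdS hd0
          rw [hM, PetAux.coeff_mul_prod_split hf m' hd0] at h
          have hprod : (∏ lam ∈ ((Finset.Iic d).erase 0).erase d, PetAux.Mfac lam (m' lam)) =
              ∏ lam ∈ ((Finset.Iic d).erase 0).erase d, PetAux.Mfac lam (PetAux.pet f S lam) := by
            refine Finset.prod_congr rfl fun lam hl => ?_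
            have h1 := Finset.mem_erase.1 hl
            have h2 := Finset.mem_erase.1 h1.2
            have hlt : PetAux.deg lam < PetAux.deg d :=
              PetAux.deg_lt_of_lt (Finset.mem_Iic.1 h2.2) h1.1
            rw [ih lam (by omega)]
          rw [hprod] at h
          have hP : PetAux.P (m' d) = PetAux.P (PetAux.pet f S d) := by
            rw [PetAux.pet_spec f S d ⟨hdS, hd0⟩, PetAux.P_toFinsupp]
            exact (sub_eq_zero.1 h).symm
          have := congrArg (fun q => q.toFinsupp.coeff) hP
          simpa using this
        · rw [hSm d hdS, PetAux.pet_eq_zero f S d (by tauto)]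
    exact funext fun d => key (PetAux.deg d) d le_rfl
end

section
/- Let σ be a finite type, R a commutative ring, and let f ∈ MvPowerSeries σ R have constant coefficient 1. Define the operator D on MvPowerSeries σ R by: the coefficient of X^d in D(f) equals ht(d) · (coefficient of X^d in f), where ht(d) = ∑_{i∈σ} d(i). Then D(f) = f · g, where g is the power series whose constant coefficient is 0 and whose coefficient at each nonzero exponent vector d equals the sum, over all nonempty finite lists (λ₁, …, λ_r) of nonzero exponent vectors with λ₁ + ⋯ + λ_r = d, of (−1)^{r−1} · ht(λ₁) · ∏_{i=1}^r (coefficient of X^{λᵢ} in f). -/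
/-- The height of an exponent vector: its total degree `∑ᵢ d i`. -/
def htv {σ : Type*} (d : σ →₀ ℕ) : ℕ := d.sum fun _ n => n


section aux
variable {σ : Type*} {R : Type*} [CommRing R]

lemma htv_zero : htv (0 : σ →₀ ℕ) = 0 := by simp [htv]

lemma htv_add (a b : σ →₀ ℕ) : htv (a + b) = htv a + htv b := by
  classical
  simp [htv, Finsupp.sum_add_index]

lemma htv_eq_zero_iff {a : σ →₀ ℕ} : htv a = 0 ↔ a = 0 := by
  classical
  unfold htv Finsupp.sum
  rw [Finset.sum_eq_zero_iff]
  constructor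
  · intro h; ext i
    by_cases hi : i ∈ a.support
    · exact h i hi
    · simpa [Finsupp.notMem_support_iff] using hi
  · rintro rfl; simp

lemma length_le_htv_sum (l : List (σ →₀ ℕ)) (h : ∀ x ∈ l, x ≠ 0) :
    l.length ≤ htv l.sum := by
  induction l with
  | nil => simp
  | cons x t ih =>
    rw [List.sum_cons, htv_add, List.length_cons]
    have hx : 1 ≤ htv x := Nat.one_le_iff_ne_zero.2 fun h0 =>
      h x (List.mem_cons_self) (htv_eq_zero_iff.1 h0)
    have ht := ih fun y hy => h y (List.mem_cons_of_mem _ hy)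
    omega

lemma OP_finite (d : σ →₀ ℕ) :
    {l : List (σ →₀ ℕ) | l ≠ [] ∧ (∀ x ∈ l, x ≠ 0) ∧ l.sum = d}.Finite := by
  classical
  have hIic : (Set.Iic d).Finite := Set.finite_Iic d
  have : Finite ↥(Set.Iic d) := hIic.to_subtype
  have hB : {l : List ↥(Set.Iic d) | l.length ≤ htv d}.Finite :=
    List.finite_length_le _ _
  refine (hB.image (List.map Subtype.val)).subset ?_
  rintro l ⟨-, h0, hsum⟩
  have hmem : ∀ x ∈ l, x ∈ Set.Iic d := fun x hx => hsum ▸ List.le_sum_of_mem hx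
  refine ⟨l.pmap (fun x h => (⟨x, h⟩ : ↥(Set.Iic d))) hmem, ?_, ?_⟩
  · simp only [Set.mem_setOf_eq, List.length_pmap]
    rw [← hsum]
    exact length_le_htv_sum l h0
  · simp [List.map_pmap]

/-- coefficient shorthand -/
noncomputable def cf (f : MvPowerSeries σ R) (lam : σ →₀ ℕ) : R :=
  MvPowerSeries.coeff lam f

/-- the term attached to an ordered partition -/
noncomputable def pterm (f : MvPowerSeries σ R) (l : List (σ →₀ ℕ)) : R :=
  (-1 : R) ^ (l.length - 1) * (htv l.headI : R) * (l.map (cf f)).prod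

/-- the finset of ordered partitions of `d` -/
noncomputable def OPF (d : σ →₀ ℕ) : Finset (List (σ →₀ ℕ)) := (OP_finite d).toFinset

lemma mem_OPF {d : σ →₀ ℕ} {l : List (σ →₀ ℕ)} :
    l ∈ OPF d ↔ l ≠ [] ∧ (∀ x ∈ l, x ≠ 0) ∧ l.sum = d := by
  simp [OPF, Set.Finite.mem_toFinset]

lemma OPF_zero : OPF (0 : σ →₀ ℕ) = ∅ := by
  ext l
  simp only [mem_OPF, Finset.notMem_empty, iff_false, not_and]
  intro hne h0 hsum
  cases l with
  | nil => exact hne rfl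
  | cons x t =>
    apply h0 x (List.mem_cons_self)
    have h1 : htv ((x :: t).sum) = 0 := by rw [hsum, htv_zero]
    rw [List.sum_cons, htv_add] at h1
    exact htv_eq_zero_iff.1 (by omega)

def swap2 {α : Type*} : List α → List α
  | x :: y :: t => y :: x :: t
  | l => l

lemma swap2_swap2 {α : Type*} (l : List α) : swap2 (swap2 l) = l := by
  rcases l with _ | ⟨x, _ | ⟨y, t⟩⟩ <;> rfl

lemma phi_eq (f : MvPowerSeries σ R) (x y : σ →₀ ℕ) (t : List (σ →₀ ℕ)) :
    pterm f (x :: y :: t) + cf f x * pterm f (y :: t)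
      = (-1 : R) ^ t.length * (cf f x * cf f y * (t.map (cf f)).prod)
          * ((htv y : R) - (htv x : R)) := by
  have h1 : (x :: y :: t).length - 1 = t.length + 1 := by simp
  have h2 : (y :: t).length - 1 = t.length := by simp
  rw [pterm, pterm, h1, h2]
  simp only [List.map_cons, List.prod_cons, List.headI]
  rw [pow_succ]
  ring

lemma key (f : MvPowerSeries σ R) (d : σ →₀ ℕ) :
    ∑ l ∈ (OPF d).filter (fun l => ¬ l.length = 1),
      (pterm f l + cf f l.headI * pterm f l.tail) = 0 := by
  classical
  apply Finset.sum_involution (g := fun l _ => swap2 l)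
  · -- f a + f (g a) = 0
    intro l hl
    rw [Finset.mem_filter, mem_OPF] at hl
    obtain ⟨⟨hne, h0, hsum⟩, hlen⟩ := hl
    rcases l with _ | ⟨x, _ | ⟨y, t⟩⟩
    · exact absurd rfl hne
    · exact absurd rfl hlen
    · show _ + (pterm f (swap2 (x :: y :: t)) + _) = 0
      rw [show swap2 (x :: y :: t) = y :: x :: t from rfl]
      simp only [List.headI, List.tail]
      rw [phi_eq, phi_eq]
      ring
  · -- f a ≠ 0 → g a ≠ a
    intro l hl hfl heq
    apply hfl
    rcases l with _ | ⟨x, _ | ⟨y, t⟩⟩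
    · simp [Finset.mem_filter, mem_OPF] at hl
    · simp [Finset.mem_filter, mem_OPF] at hl
    · rw [show swap2 (x :: y :: t) = y :: x :: t from rfl] at heq
      injection heq with h1 h2
      subst h1
      simp only [List.headI, List.tail]
      rw [phi_eq]
      simp
  · -- g a ∈ s
    intro l hl
    rw [Finset.mem_filter, mem_OPF] at hl ⊢
    obtain ⟨⟨hne, h0, hsum⟩, hlen⟩ := hl
    rcases l with _ | ⟨x, _ | ⟨y, t⟩⟩
    · exact absurd rfl hne
    · exact absurd rfl hlen
    · refine ⟨⟨by simp [swap2], ?_, ?_⟩, ?_⟩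
      · intro z hz
        apply h0
        rw [show swap2 (x :: y :: t) = y :: x :: t from rfl] at hz
        simp only [List.mem_cons] at hz ⊢
        tauto
      · rw [show swap2 (x :: y :: t) = y :: x :: t from rfl, ← hsum]
        simp only [List.sum_cons]
        rw [← add_assoc, ← add_assoc, add_comm (y:(σ→₀ℕ)) x]
      · simp [swap2]
  · -- involutive
    intro l _
    exact swap2_swap2 l


lemma OPF_filter_one {d : σ →₀ ℕ} (hd : d ≠ 0) :
    (OPF d).filter (fun l => l.length = 1) = {[d]} := by
  ext l
  simp only [Finset.mem_filter, mem_OPF, Finset.mem_singleton]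
  constructor
  · rintro ⟨⟨hne, h0, hsum⟩, hlen⟩
    obtain ⟨x, rfl⟩ := List.length_eq_one_iff.1 hlen
    simp only [List.sum_cons, List.sum_nil, add_zero] at hsum
    rw [hsum]
  · rintro rfl
    exact ⟨⟨by simp, by simpa using hd, by simp⟩, rfl⟩

lemma hE [DecidableEq σ] (f : MvPowerSeries σ R) (d : σ →₀ ℕ) :
    ∑ p ∈ (Finset.HasAntidiagonal.antidiagonal d).erase ((0 : σ →₀ ℕ), d),
        cf f p.1 * ∑ l ∈ OPF p.2, pterm f l
      = ∑ l ∈ (OPF d).filter (fun l => ¬ l.length = 1),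
          cf f l.headI * pterm f l.tail := by
  classical
  simp_rw [Finset.mul_sum]
  rw [Finset.sum_sigma']
  refine Finset.sum_nbij' (fun x => x.1.1 :: x.2)
    (fun l => ⟨(l.headI, l.tail.sum), l.tail⟩) ?_ ?_ ?_ ?_ ?_
  · rintro ⟨p, l⟩ hx
    rw [Finset.mem_sigma, Finset.mem_erase, Finset.HasAntidiagonal.mem_antidiagonal] at hx
    obtain ⟨⟨hpne, hpsum⟩, hl⟩ := hx
    rw [mem_OPF] at hl
    obtain ⟨hlne, hl0, hlsum⟩ := hl
    have hp1 : p.1 ≠ 0 := by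
      intro h
      apply hpne
      have : p.2 = d := by rw [← hpsum, h, zero_add]
      rw [Prod.ext_iff]
      exact ⟨h, this⟩
    rw [Finset.mem_filter, mem_OPF]
    refine ⟨⟨List.cons_ne_nil _ _, ?_, ?_⟩, ?_⟩
    · intro z hz
      rcases List.mem_cons.1 hz with rfl | hz
      · exact hp1
      · exact hl0 z hz
    · rw [List.sum_cons, hlsum, hpsum]
    · dsimp only
      simp only [List.length_cons]
      intro h
      have hl0' : l.length = 0 := by omega
      exact hlne (List.length_eq_zero_iff.1 hl0')
  · intro l hl
    rw [Finset.mem_filter, mem_OPF] at hl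
    obtain ⟨⟨hlne, hl0, hlsum⟩, hlen⟩ := hl
    rcases l with _ | ⟨x, t⟩
    · exact absurd rfl hlne
    · simp only [List.headI, List.tail]
      rw [Finset.mem_sigma, Finset.mem_erase, Finset.HasAntidiagonal.mem_antidiagonal, mem_OPF]
      refine ⟨⟨?_, ?_⟩, ?_, ?_, ?_⟩
      · intro h
        have : x = 0 := congrArg Prod.fst h
        exact hl0 x (List.mem_cons_self) this
      · simpa using hlsum
      · intro h
        dsimp only at h
        subst h
        exact hlen rfl
      · intro z hz
        exact hl0 z (List.mem_cons_of_mem _ hz)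
      · rfl
  · rintro ⟨p, l⟩ hx
    rw [Finset.mem_sigma, Finset.mem_erase, Finset.HasAntidiagonal.mem_antidiagonal] at hx
    obtain ⟨-, hl⟩ := hx
    rw [mem_OPF] at hl
    simp only [List.headI, List.tail]
    obtain ⟨-, -, hlsum⟩ := hl
    obtain ⟨a, b⟩ := p
    simp only at hlsum ⊢
    subst hlsum
    rfl
  · intro l hl
    rw [Finset.mem_filter, mem_OPF] at hl
    rcases l with _ | ⟨x, t⟩
    · exact absurd rfl hl.1.1
    · rfl
  · rintro ⟨p, l⟩ _
    rfl

lemma main_id [DecidableEq σ] (f : MvPowerSeries σ R)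
    (hf : MvPowerSeries.constantCoeff f = 1) {d : σ →₀ ℕ} (hd : d ≠ 0) :
    ∑ p ∈ Finset.HasAntidiagonal.antidiagonal d, cf f p.1 * ∑ l ∈ OPF p.2, pterm f l
      = (htv d : R) * cf f d := by
  have h0d : ((0 : σ →₀ ℕ), d) ∈ Finset.HasAntidiagonal.antidiagonal d := by simp
  rw [← Finset.add_sum_erase _ _ h0d, hE f d]
  have hc0 : cf f (0 : σ →₀ ℕ) = 1 := by
    rw [cf, MvPowerSeries.coeff_zero_eq_constantCoeff_apply, hf]
  dsimp only
  rw [hc0, one_mul,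
    ← Finset.sum_filter_add_sum_filter_not (OPF d) (fun l => l.length = 1) (pterm f),
    OPF_filter_one hd, Finset.sum_singleton]
  have hsing : pterm f [d] = (htv d : R) * cf f d := by simp [pterm]
  rw [hsing, add_assoc, ← Finset.sum_add_distrib, key f d, add_zero]
end aux

/-- **Logarithmic-derivative expansion over ordered partitions** (proof of Theorem 5.1):
let `f ∈ MvPowerSeries σ R` have constant coefficient `1` and let `D` be the operator with
`coeff d (D f) = ht(d) · coeff d f`.  Then `D f = f * g`, where `g` has constant
coefficient `0` and, at each nonzero `d`, coefficient the (finite) sum over all nonempty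
lists `(λ₁, …, λ_r)` of nonzero exponent vectors with sum `d` of
`(-1)^{r-1} · ht(λ₁) · ∏ᵢ (coeff of X^{λᵢ} in f)`. -/
theorem stmt_7 (σ : Type*) [Fintype σ] (R : Type*) [CommRing R]
    (f : MvPowerSeries σ R) (hf : MvPowerSeries.constantCoeff f = 1) :
    ∃ g : MvPowerSeries σ R,
      MvPowerSeries.coeff 0 g = 0 ∧
      (∀ d : σ →₀ ℕ, d ≠ 0 →
        MvPowerSeries.coeff d g =
          ∑ᶠ l ∈ {l : List (σ →₀ ℕ) | l ≠ [] ∧ (∀ x ∈ l, x ≠ 0) ∧ l.sum = d},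
            (-1 : R) ^ (l.length - 1) * (htv l.headI : R) *
              (l.map fun lam => MvPowerSeries.coeff lam f).prod) ∧
      (∀ d : σ →₀ ℕ,
        (htv d : R) * MvPowerSeries.coeff d f = MvPowerSeries.coeff d (f * g)) := by
  classical
  refine ⟨(id (fun d => ∑ l ∈ OPF d, pterm f l) : MvPowerSeries σ R), ?_, ?_, ?_⟩
  · rw [MvPowerSeries.coeff_apply]
    show (∑ l ∈ OPF (0 : σ →₀ ℕ), pterm f l) = 0
    rw [OPF_zero, Finset.sum_empty]
  · intro d hd
    rw [MvPowerSeries.coeff_apply,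
      finsum_mem_eq_finite_toFinset_sum _ (OP_finite d)]
    rfl
  · intro d
    rw [MvPowerSeries.coeff_mul]
    by_cases hd : d = 0
    · subst hd
      rw [Finsupp.antidiagonal_zero, Finset.sum_singleton]
      have hz : MvPowerSeries.coeff (0 : σ →₀ ℕ)
          ((id (fun d => ∑ l ∈ OPF d, pterm f l) : MvPowerSeries σ R)) = 0 := by
        rw [MvPowerSeries.coeff_apply]
        show (∑ l ∈ OPF (0 : σ →₀ ℕ), pterm f l) = 0
        rw [OPF_zero, Finset.sum_empty]
      rw [htv_zero]
      show ((0 : ℕ) : R) * _ = _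
      rw [Nat.cast_zero, zero_mul]
      show (0 : R) = MvPowerSeries.coeff (0, 0).1 f * MvPowerSeries.coeff ((0 : σ →₀ ℕ), (0 : σ →₀ ℕ)).2 _
      rw [show ((0 : σ →₀ ℕ), (0 : σ →₀ ℕ)).2 = (0 : σ →₀ ℕ) from rfl, hz, mul_zero]
    · exact (main_id f hf hd).symm
end

section
/- Let σ be a finite type and let f ∈ MvPowerSeries σ ℤ[t] have constant coefficient 1, with product-form exponent family m, i.e. f = ∏_{λ ≠ 0} ∏_{n ≥ 0} (1 − tⁿX^λ)^{m(λ,n)}. Define the operator D by: the coefficient of X^d in D(f) equals ht(d) · (coefficient of X^d in f), where ht(d) = ∑_{i∈σ} d(i). Then D(f) = f · h, where h is the power series with constant coefficient 0 whose coefficient at each nonzero exponent vector d equals −∑ ht(κ) · (∑_{n≥0} m(κ,n) · t^{kn}), the outer sum being over all pairs (k, κ) of a positive integer k and a nonzero exponent vector κ with d = k·κ. -/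
namespace Stmt8Aux

open MvPowerSeries Finset

variable {σ : Type*} {R : Type*} [CommRing R]

/-! ### Height lemmas -/

theorem htv_zero : htv (0 : σ →₀ ℕ) = 0 := by simp [htv]

theorem htv_add (a b : σ →₀ ℕ) : htv (a + b) = htv a + htv b :=
  Finsupp.sum_add_index' (fun _ => rfl) (fun _ _ _ => rfl)

theorem htv_smul (k : ℕ) (a : σ →₀ ℕ) : htv (k • a) = k * htv a := by
  induction k with
  | zero => simp [htv_zero]
  | succ k ih => rw [succ_nsmul, htv_add, ih, Nat.succ_mul]

theorem htv_eq_zero {a : σ →₀ ℕ} (h : htv a = 0) : a = 0 := by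
  ext i
  by_cases hi : i ∈ a.support
  · simpa using Finset.sum_eq_zero_iff.mp h i hi
  · simpa using Finsupp.notMem_support_iff.mp hi

theorem htv_pos {a : σ →₀ ℕ} (h : a ≠ 0) : 1 ≤ htv a :=
  Nat.pos_of_ne_zero fun h0 => h (htv_eq_zero h0)

theorem htv_mono {a b : σ →₀ ℕ} (h : a ≤ b) : htv a ≤ htv b := by
  obtain ⟨c, rfl⟩ := le_iff_exists_add.mp h
  rw [htv_add]; exact Nat.le_add_right _ _

theorem le_nsmul_self {lam : σ →₀ ℕ} {j : ℕ} (hj : 1 ≤ j) : lam ≤ j • lam := by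
  obtain ⟨j', rfl⟩ : ∃ j', j = j' + 1 := ⟨j - 1, by omega⟩
  rw [succ_nsmul]
  exact le_add_self

/-! ### The operator `Dop` -/

noncomputable def Dop (F : MvPowerSeries σ R) : MvPowerSeries σ R :=
  fun d => (htv d : R) * coeff d F

theorem coeff_Dop (d : σ →₀ ℕ) (F : MvPowerSeries σ R) :
    coeff d (Dop F) = (htv d : R) * coeff d F := rfl

theorem Dop_one : Dop (1 : MvPowerSeries σ R) = 0 := by
  classical
  ext d
  rw [coeff_Dop, coeff_one, map_zero]
  split_ifs with h
  · subst h; simp [htv_zero]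
  · simp

theorem Dop_mul (F G : MvPowerSeries σ R) : Dop (F * G) = Dop F * G + F * Dop G := by
  classical
  ext d
  rw [map_add, coeff_Dop, coeff_mul, coeff_mul, coeff_mul, Finset.mul_sum,
    ← Finset.sum_add_distrib]
  refine Finset.sum_congr rfl fun p hp => ?_
  rw [Finset.HasAntidiagonal.mem_antidiagonal] at hp
  rw [coeff_Dop, coeff_Dop, ← hp, htv_add]
  push_cast
  ring

theorem Dop_prod {ι : Type*} (I : Finset ι) (F W : ι → MvPowerSeries σ R)
    (h : ∀ i ∈ I, Dop (F i) = F i * W i) :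
    Dop (∏ i ∈ I, F i) = (∏ i ∈ I, F i) * ∑ i ∈ I, W i := by
  classical
  revert h
  refine Finset.induction_on I ?_ ?_
  · intro _; simp [Dop_one]
  · intro a s ha ih h
    rw [Finset.prod_insert ha, Finset.sum_insert ha, Dop_mul,
      h a (Finset.mem_insert_self a s), ih fun i hi => h i (Finset.mem_insert_of_mem hi)]
    ring

theorem Dop_pow (g gi : MvPowerSeries σ R) (hgi : g * gi = 1) (j : ℕ) :
    Dop (g ^ j) = g ^ j * ((j : MvPowerSeries σ R) * (gi * Dop g)) := by
  induction j with
  | zero => simp [Dop_one]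
  | succ j ih =>
    rw [pow_succ, Dop_mul, ih]
    push_cast
    linear_combination (-(g ^ j * Dop g)) * hgi

theorem Dop_inv (g gi : MvPowerSeries σ R) (hgi : g * gi = 1) :
    Dop gi = -(gi * gi * Dop g) := by
  have h1 : Dop g * gi + g * Dop gi = 0 := by rw [← Dop_mul, hgi, Dop_one]
  have h2 : gi * (Dop g * gi + g * Dop gi) = 0 := by rw [h1, mul_zero]
  linear_combination h2 - Dop gi * hgi

theorem Dop_zpowSeries (g : MvPowerSeries σ R) (hg : constantCoeff g = 1) (k : ℤ) :
    Dop (zpowSeries g k) =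
      zpowSeries g k * ((k : MvPowerSeries σ R) * (invOfUnit g 1 * Dop g)) := by
  have hgi : g * invOfUnit g 1 = 1 := mul_invOfUnit g 1 (by rw [hg]; rfl)
  set gi := invOfUnit g 1 with hgidef
  rw [zpowSeries]
  split_ifs with hk
  · rw [Dop_pow g gi hgi,
      show ((k.toNat : ℕ) : MvPowerSeries σ R) = ((k : ℤ) : MvPowerSeries σ R) by
        rw [← Int.cast_natCast, Int.toNat_of_nonneg hk]]
  · have hgi' : gi * g = 1 := by rw [mul_comm]; exact hgi
    rw [Dop_pow gi g hgi']
    have hDgi : g * Dop gi = -(gi * Dop g) := by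
      rw [Dop_inv g gi hgi]
      linear_combination (-(gi * Dop g)) * hgi
    rw [hDgi,
      show (((-k).toNat : ℕ) : MvPowerSeries σ R) = ((-k : ℤ) : MvPowerSeries σ R) by
        rw [← Int.cast_natCast, Int.toNat_of_nonneg (by omega)]]
    push_cast
    ring

theorem Dop_one_sub_monomial (lam : σ →₀ ℕ) (c : R) :
    Dop (1 - MvPowerSeries.monomial lam c) =
      -(MvPowerSeries.monomial lam ((htv lam : R) * c)) := by
  classical
  ext d
  rw [map_neg, coeff_Dop, map_sub, coeff_one, coeff_monomial, coeff_monomial]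
  by_cases hd : d = lam
  · subst hd
    rw [if_pos rfl, if_pos rfl]
    by_cases h0 : d = 0
    · subst h0; simp [htv_zero]
    · rw [if_neg h0]; ring
  · rw [if_neg hd, if_neg hd]
    split_ifs with h0
    · subst h0; simp [htv_zero]
    · simp

/-! ### Support on multiples of `lam` -/

def PredM (lam : σ →₀ ℕ) (F : MvPowerSeries σ R) : Prop :=
  ∀ c, coeff c F ≠ 0 → ∃ j : ℕ, c = j • lam

theorem predM_one (lam : σ →₀ ℕ) : PredM lam (1 : MvPowerSeries σ R) := by
  classical
  intro c hc
  rw [coeff_one] at hc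
  refine ⟨0, ?_⟩
  rw [zero_smul]
  by_contra h
  rw [if_neg h] at hc
  exact hc rfl

theorem predM_mul {lam : σ →₀ ℕ} {F G : MvPowerSeries σ R}
    (hF : PredM lam F) (hG : PredM lam G) : PredM lam (F * G) := by
  classical
  intro c hc
  rw [coeff_mul] at hc
  obtain ⟨p, hp, hne⟩ := Finset.exists_ne_zero_of_sum_ne_zero hc
  obtain ⟨j1, h1⟩ := hF p.1 (left_ne_zero_of_mul hne)
  obtain ⟨j2, h2⟩ := hG p.2 (right_ne_zero_of_mul hne)
  exact ⟨j1 + j2, by rw [← Finset.HasAntidiagonal.mem_antidiagonal.mp hp, h1, h2, add_smul]⟩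

theorem predM_pow {lam : σ →₀ ℕ} {F : MvPowerSeries σ R} (hF : PredM lam F) (j : ℕ) :
    PredM lam (F ^ j) := by
  induction j with
  | zero => rw [pow_zero]; exact predM_one lam
  | succ j ih => rw [pow_succ]; exact predM_mul ih hF

theorem predM_one_sub_monomial (lam : σ →₀ ℕ) (c : R) :
    PredM lam (1 - MvPowerSeries.monomial lam c) := by
  classical
  intro d hd
  rw [map_sub, coeff_one, coeff_monomial] at hd
  by_cases h0 : d = 0
  · exact ⟨0, by rw [h0, zero_smul]⟩
  · by_cases hl : d = lam
    · exact ⟨1, by rw [hl, one_smul]⟩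
    · exfalso; rw [if_neg h0, if_neg hl, sub_zero] at hd; exact hd rfl

theorem predM_invOfUnit {lam : σ →₀ ℕ} {g : MvPowerSeries σ R} (hg : PredM lam g) (u : Rˣ) :
    PredM lam (invOfUnit g u) := by
  classical
  suffices H : ∀ N c, htv c ≤ N → coeff c (invOfUnit g u) ≠ 0 → ∃ j : ℕ, c = j • lam by
    intro c hc; exact H (htv c) c le_rfl hc
  intro N
  induction N with
  | zero =>
    intro c hc _
    exact ⟨0, by rw [zero_smul]; exact htv_eq_zero (Nat.le_zero.mp hc)⟩
  | succ N ih =>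
    intro c hc hne
    by_cases hc0 : c = 0
    · exact ⟨0, by rw [hc0, zero_smul]⟩
    · rw [coeff_invOfUnit, if_neg hc0] at hne
      have hne' := right_ne_zero_of_mul hne
      obtain ⟨p, hp, hpn⟩ := Finset.exists_ne_zero_of_sum_ne_zero hne'
      rw [Finset.HasAntidiagonal.mem_antidiagonal] at hp
      by_cases hlt : p.2 < c
      · rw [if_pos hlt] at hpn
        obtain ⟨j1, h1⟩ := hg p.1 (left_ne_zero_of_mul hpn)
        have hp1 : p.1 ≠ 0 := by
          rintro h
          rw [h, zero_add] at hp
          exact absurd hp (ne_of_lt hlt)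
        have hb : htv p.2 ≤ N := by
          have h2 : htv p.1 + htv p.2 = htv c := by rw [← htv_add, hp]
          have h3 := htv_pos hp1
          omega
        obtain ⟨j2, h2⟩ := ih p.2 hb (right_ne_zero_of_mul hpn)
        exact ⟨j1 + j2, by rw [← hp, h1, h2, add_smul]⟩
      · rw [if_neg hlt] at hpn
        exact absurd rfl hpn

theorem predM_zpowSeries {lam : σ →₀ ℕ} {F : MvPowerSeries σ R} (hF : PredM lam F) (k : ℤ) :
    PredM lam (zpowSeries F k) := by
  rw [zpowSeries]
  split_ifs
  · exact predM_pow hF _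
  · exact predM_pow (predM_invOfUnit hF 1) _

/-! ### Series which are `1` below `a` -/

def OneBelow (a : σ →₀ ℕ) (F : MvPowerSeries σ R) : Prop :=
  coeff 0 F = 1 ∧ ∀ c ≤ a, c ≠ 0 → coeff c F = 0

theorem oneBelow_one (a : σ →₀ ℕ) : OneBelow a (1 : MvPowerSeries σ R) := by
  classical
  refine ⟨by rw [coeff_one, if_pos rfl], fun c _ hc0 => by rw [coeff_one, if_neg hc0]⟩

theorem oneBelow_mul {a : σ →₀ ℕ} {F G : MvPowerSeries σ R}
    (hF : OneBelow a F) (hG : OneBelow a G) : OneBelow a (F * G) := by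
  classical
  constructor
  · rw [coeff_zero_eq_constantCoeff_apply, map_mul, ← coeff_zero_eq_constantCoeff_apply,
      ← coeff_zero_eq_constantCoeff_apply, hF.1, hG.1, one_mul]
  · intro c hca hc0
    rw [coeff_mul]
    refine Finset.sum_eq_zero fun p hp => ?_
    rw [Finset.HasAntidiagonal.mem_antidiagonal] at hp
    by_cases h2 : p.2 = 0
    · have h1 : p.1 = c := by rw [← hp, h2, add_zero]
      rw [hF.2 p.1 (h1 ▸ hca) (h1 ▸ hc0), zero_mul]
    · have hp2 : p.2 ≤ a := le_trans (hp ▸ le_add_self) hca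
      rw [hG.2 p.2 hp2 h2, mul_zero]

theorem mul_oneBelow_coeff {a : σ →₀ ℕ} {F G : MvPowerSeries σ R}
    (hG : OneBelow a G) {c : σ →₀ ℕ} (hc : c ≤ a) :
    coeff c (F * G) = coeff c F := by
  classical
  rw [coeff_mul, Finset.sum_eq_single (c, 0)]
  · rw [hG.1, mul_one]
  · intro p hp hne
    rw [Finset.HasAntidiagonal.mem_antidiagonal] at hp
    by_cases h2 : p.2 = 0
    · exact absurd (Prod.ext (by rw [← hp, h2, add_zero]) h2) hne
    · rw [hG.2 p.2 (le_trans (hp ▸ le_add_self) hc) h2, mul_zero]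
  · intro hmem
    exact absurd (Finset.HasAntidiagonal.mem_antidiagonal.mpr (add_zero c)) hmem

theorem oneBelow_of_predM {a lam : σ →₀ ℕ} {F : MvPowerSeries σ R}
    (hlam0 : lam ≠ 0) (hla : ¬lam ≤ a) (hp : PredM lam F) (hc : coeff 0 F = 1) :
    OneBelow a F := by
  refine ⟨hc, fun c hca hc0 => ?_⟩
  by_contra hne
  obtain ⟨j, rfl⟩ := hp c hne
  rcases Nat.eq_zero_or_pos j with hj | hj
  · rw [hj, zero_smul] at hc0; exact hc0 rfl
  · exact hla (le_trans (le_nsmul_self hj) hca)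

/-! ### Truncation of the product -/

theorem coeff_prod_of_oneBelow {a : σ →₀ ℕ} (T T' : Finset (σ →₀ ℕ)) (hsub : T' ⊆ T)
    (Fl : (σ →₀ ℕ) → MvPowerSeries σ R)
    (h : ∀ lam ∈ T, lam ∉ T' → OneBelow a (Fl lam)) :
    coeff a (∏ lam ∈ T, Fl lam) = coeff a (∏ lam ∈ T', Fl lam) := by
  classical
  rw [← Finset.prod_sdiff hsub, mul_comm]
  refine mul_oneBelow_coeff ?_ le_rfl
  refine Finset.prod_induction _ _ (fun _ _ => oneBelow_mul) (oneBelow_one a) ?_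
  intro lam hlam
  rw [Finset.mem_sdiff] at hlam
  exact h lam hlam.1 hlam.2

/-! ### The geometric series computation -/

theorem coeff_inv_mul_monomial [DecidableEq (σ →₀ ℕ)] {lam : σ →₀ ℕ} (hlam : lam ≠ 0) (c : R) {b : σ →₀ ℕ} {K : ℕ}
    (hb : htv b ≤ K) {gi : MvPowerSeries σ R}
    (hgi : gi * (1 - MvPowerSeries.monomial lam c) = 1) :
    coeff b (gi * MvPowerSeries.monomial lam c) =
      ∑ k ∈ Finset.Icc 1 K, if b = k • lam then c ^ k else 0 := by
  classical
  set Y := MvPowerSeries.monomial lam c with hY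
  have hYpow : ∀ k : ℕ, Y ^ k = MvPowerSeries.monomial (k • lam) (c ^ k) := by
    intro k
    induction k with
    | zero => rw [pow_zero, zero_smul, pow_zero]; rfl
    | succ k ih => rw [pow_succ, ih, hY, monomial_mul_monomial, succ_nsmul, pow_succ]
  have hgi1 : gi = 1 + gi * Y := by linear_combination hgi
  have hrec : ∀ K' : ℕ, gi * Y =
      (∑ k ∈ Finset.Icc 1 K', MvPowerSeries.monomial (k • lam) (c ^ k)) + gi * Y ^ (K' + 1) := by
    intro K'
    induction K' with
    | zero => simp [pow_one]
    | succ K' ih =>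
      rw [ih, Finset.sum_Icc_succ_top (Nat.succ_le_succ (Nat.zero_le _))]
      have hstep : gi * Y ^ (K' + 1) = Y ^ (K' + 1) + gi * Y ^ (K' + 1 + 1) := by
        conv_lhs => rw [hgi1]
        ring
      rw [hstep, hYpow (K' + 1)]
      ring
  rw [hrec K, map_add, map_sum]
  have hzero : coeff b (gi * Y ^ (K + 1)) = 0 := by
    rw [hYpow, coeff_mul]
    refine Finset.sum_eq_zero fun p hp => ?_
    rw [Finset.HasAntidiagonal.mem_antidiagonal] at hp
    rw [coeff_monomial]
    split_ifs with h
    · exfalso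
      have h1 : htv p.2 ≤ htv b := htv_mono (hp ▸ le_add_self)
      rw [h, htv_smul] at h1
      have h2 := htv_pos hlam
      nlinarith
    · rw [mul_zero]
  rw [hzero, add_zero]
  refine Finset.sum_congr rfl fun k _ => ?_
  rw [coeff_monomial]
  split_ifs <;> rfl

theorem coeff_intCast_mul (b : σ →₀ ℕ) (z : ℤ) (F : MvPowerSeries σ R) :
    coeff b ((z : MvPowerSeries σ R) * F) = (z : R) * coeff b F := by
  rw [← zsmul_eq_mul, map_zsmul, zsmul_eq_mul]

end Stmt8Aux

namespace Stmt8Aux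

open MvPowerSeries Finset

variable {σ : Type*} {R : Type*} [CommRing R]

theorem constantCoeff_zpowSeries (g : MvPowerSeries σ R) (hg : constantCoeff g = 1)
    (k : ℤ) : constantCoeff (zpowSeries g k) = 1 := by
  rw [zpowSeries]
  split_ifs
  · rw [map_pow, hg, one_pow]
  · rw [map_pow, constantCoeff_invOfUnit]; simp

theorem coeff_zero_mul (A B : MvPowerSeries σ R) :
    coeff 0 (A * B) = coeff 0 A * coeff 0 B := by
  rw [coeff_zero_eq_constantCoeff_apply, map_mul, ← coeff_zero_eq_constantCoeff_apply,
    ← coeff_zero_eq_constantCoeff_apply]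

theorem main_aux {σ : Type*} [Fintype σ] {R : Type*} [CommRing R] (c : ℕ → R)
    (f : MvPowerSeries σ R) (m : (σ →₀ ℕ) → (ℕ →₀ ℤ))
    (hm : ∀ d : σ →₀ ℕ, coeff d f = coeff d
      (∏ lam ∈ (open Classical in Finset.Iic d).erase 0, ∏ n ∈ (m lam).support,
        zpowSeries (1 - MvPowerSeries.monomial lam (c n)) (m lam n)))
    (h : MvPowerSeries σ R) (hh0 : coeff 0 h = 0)
    (hhb : ∀ b : σ →₀ ℕ, b ≠ 0 → coeff b h =
      -∑ᶠ p ∈ {p : ℕ × (σ →₀ ℕ) | 0 < p.1 ∧ p.2 ≠ 0 ∧ b = p.1 • p.2},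
        (htv p.2 : R) * ((m p.2).sum fun n z => z • c n ^ p.1))
    (d : σ →₀ ℕ) :
    (htv d : R) * coeff d f = coeff d (f * h) := by
  set Fl : (σ →₀ ℕ) → MvPowerSeries σ R := fun lam =>
    ∏ n ∈ (m lam).support, zpowSeries (1 - MvPowerSeries.monomial lam (c n)) (m lam n)
    with hFl
  set S : Finset (σ →₀ ℕ) := (open Classical in Finset.Iic d).erase 0 with hSdef
  set K : ℕ := htv d with hKdef
  -- facts about the factors
  have hgconst : ∀ lam : σ →₀ ℕ, lam ≠ 0 → ∀ n : ℕ,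
      constantCoeff (1 - MvPowerSeries.monomial lam (c n)) = 1 := by
    classical
    intro lam hl n
    rw [← coeff_zero_eq_constantCoeff_apply, map_sub, coeff_one, coeff_monomial,
      if_pos rfl, if_neg fun hh => hl hh.symm, sub_zero]
  have hgi : ∀ lam : σ →₀ ℕ, lam ≠ 0 → ∀ n : ℕ,
      (1 - MvPowerSeries.monomial lam (c n)) *
        invOfUnit (1 - MvPowerSeries.monomial lam (c n)) 1 = 1 := fun lam hl n =>
    mul_invOfUnit _ _ (by rw [hgconst lam hl n]; rfl)
  -- truncation
  have hOB : ∀ a : σ →₀ ℕ, ∀ lam ∈ S, ¬lam ≤ a → OneBelow a (Fl lam) := by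
    intro a lam h1 hla
    have hl0 : lam ≠ 0 := (Finset.mem_erase.mp h1).1
    refine oneBelow_of_predM hl0 hla ?_ ?_
    · simp only [hFl]
      exact Finset.prod_induction _ _ (fun _ _ => predM_mul) (predM_one lam)
        fun n _ => predM_zpowSeries (predM_one_sub_monomial lam (c n)) _
    · simp only [hFl]
      rw [coeff_zero_eq_constantCoeff_apply, map_prod]
      exact Finset.prod_eq_one fun n _ => constantCoeff_zpowSeries _ (hgconst lam hl0 n) _
  have hfP : ∀ a : σ →₀ ℕ, a ≤ d → coeff a f = coeff a (∏ lam ∈ S, Fl lam) := by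
    intro a ha
    rw [hm a]
    refine (coeff_prod_of_oneBelow S _ ?_ Fl fun lam hl hnot => hOB a lam hl ?_).symm
    · intro x hx
      rw [Finset.mem_erase] at hx
      open Classical in rw [Finset.mem_Iic] at hx
      exact Finset.mem_erase.mpr ⟨hx.1, by open Classical in exact Finset.mem_Iic.mpr (le_trans hx.2 ha)⟩
    · intro hle
      exact hnot (Finset.mem_erase.mpr ⟨(Finset.mem_erase.mp hl).1, by open Classical in exact Finset.mem_Iic.mpr hle⟩)
  -- the derivative of the product
  have hDP : Dop (∏ lam ∈ S, Fl lam) = (∏ lam ∈ S, Fl lam) *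
      ∑ lam ∈ S, ∑ n ∈ (m lam).support,
        ((m lam n : ℤ) : MvPowerSeries σ R) *
          (invOfUnit (1 - MvPowerSeries.monomial lam (c n)) 1 *
            Dop (1 - MvPowerSeries.monomial lam (c n))) := by
    refine Dop_prod S Fl _ ?_
    intro lam hlam
    have hl0 : lam ≠ 0 := (Finset.mem_erase.mp hlam).1
    simp only [hFl]
    refine Dop_prod _ _ _ ?_
    intro n _
    exact Dop_zpowSeries _ (hgconst lam hl0 n) _
  -- coefficient of H at 0
  have hH0 : coeff 0 (∑ lam ∈ S, ∑ n ∈ (m lam).support,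
      ((m lam n : ℤ) : MvPowerSeries σ R) *
        (invOfUnit (1 - MvPowerSeries.monomial lam (c n)) 1 *
          Dop (1 - MvPowerSeries.monomial lam (c n)))) = 0 := by
    rw [map_sum]
    refine Finset.sum_eq_zero fun lam _ => ?_
    rw [map_sum]
    refine Finset.sum_eq_zero fun n _ => ?_
    rw [coeff_zero_mul, coeff_zero_mul, coeff_Dop, htv_zero]
    simp
  -- coefficient of H at b ≤ d, b ≠ 0
  have hHb : ∀ b : σ →₀ ℕ, b ≤ d → b ≠ 0 → coeff b (∑ lam ∈ S, ∑ n ∈ (m lam).support,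
      ((m lam n : ℤ) : MvPowerSeries σ R) *
        (invOfUnit (1 - MvPowerSeries.monomial lam (c n)) 1 *
          Dop (1 - MvPowerSeries.monomial lam (c n)))) =
      -∑ lam ∈ S, ∑ k ∈ Finset.Icc 1 K,
        (if b = k • lam then (htv lam : R) * ((m lam).sum fun n z => z • c n ^ k) else 0) := by
    intro b hbd hb0
    rw [map_sum, ← Finset.sum_neg_distrib]
    refine Finset.sum_congr rfl fun lam hlam => ?_
    have hl0 : lam ≠ 0 := (Finset.mem_erase.mp hlam).1
    rw [map_sum]
    have hterm : ∀ n : ℕ, coeff b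
        (((m lam n : ℤ) : MvPowerSeries σ R) *
          (invOfUnit (1 - MvPowerSeries.monomial lam (c n)) 1 *
            Dop (1 - MvPowerSeries.monomial lam (c n)))) =
        ((m lam n : ℤ) : R) *
          (-∑ k ∈ Finset.Icc 1 K, if b = k • lam then (htv lam : R) * c n ^ k else 0) := by
      intro n
      rw [coeff_intCast_mul]
      congr 1
      have h1 : coeff b (invOfUnit (1 - MvPowerSeries.monomial lam (c n)) 1 *
          MvPowerSeries.monomial lam (c n)) =
          ∑ k ∈ Finset.Icc 1 K, if b = k • lam then c n ^ k else 0 :=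
        coeff_inv_mul_monomial hl0 (c n) (htv_mono hbd)
          (by rw [mul_comm]; exact hgi lam hl0 n)
      have hmono : MvPowerSeries.monomial lam ((htv lam : R) * c n) =
          (htv lam : R) • MvPowerSeries.monomial lam (c n) := by
        rw [← smul_eq_mul, map_smul]
      rw [Dop_one_sub_monomial, mul_neg, map_neg, hmono, mul_smul_comm, map_smul,
        smul_eq_mul, h1, Finset.mul_sum]
      refine congrArg Neg.neg (Finset.sum_congr rfl fun k _ => ?_)
      rw [mul_ite, mul_zero]
    rw [Finset.sum_congr rfl fun n _ => hterm n]
    calc ∑ n ∈ (m lam).support, ((m lam n : ℤ) : R) *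
          (-∑ k ∈ Finset.Icc 1 K, if b = k • lam then (htv lam : R) * c n ^ k else 0)
        = ∑ n ∈ (m lam).support, ∑ k ∈ Finset.Icc 1 K,
            (if b = k • lam then -(((m lam n : ℤ) : R) * ((htv lam : R) * c n ^ k)) else 0) := by
          refine Finset.sum_congr rfl fun n _ => ?_
          rw [mul_neg, Finset.mul_sum, ← Finset.sum_neg_distrib]
          refine Finset.sum_congr rfl fun k _ => ?_
          rw [mul_ite, mul_zero]
          split_ifs <;> simp
      _ = ∑ k ∈ Finset.Icc 1 K, ∑ n ∈ (m lam).support,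
            (if b = k • lam then -(((m lam n : ℤ) : R) * ((htv lam : R) * c n ^ k)) else 0) :=
          Finset.sum_comm
      _ = -∑ k ∈ Finset.Icc 1 K,
            (if b = k • lam then (htv lam : R) * ((m lam).sum fun n z => z • c n ^ k) else 0) := by
          rw [← Finset.sum_neg_distrib]
          refine Finset.sum_congr rfl fun k _ => ?_
          split_ifs with hP
          · rw [Finsupp.sum, Finset.mul_sum, ← Finset.sum_neg_distrib]
            refine Finset.sum_congr rfl fun n _ => ?_
            rw [zsmul_eq_mul]
            ring
          · simp
  -- coefficient of h at b ≤ d, b ≠ 0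
  have hhb' : ∀ b : σ →₀ ℕ, b ≤ d → b ≠ 0 → coeff b h =
      -∑ lam ∈ S, ∑ k ∈ Finset.Icc 1 K,
        (if b = k • lam then (htv lam : R) * ((m lam).sum fun n z => z • c n ^ k) else 0) := by
    intro b hbd hb0
    rw [hhb b hb0]
    have hset : {p : ℕ × (σ →₀ ℕ) | 0 < p.1 ∧ p.2 ≠ 0 ∧ b = p.1 • p.2} =
        ↑((Finset.Icc 1 K ×ˢ S).filter fun p => b = p.1 • p.2) := by
      ext p
      simp only [Set.mem_setOf_eq, Finset.coe_filter, Finset.mem_product, Finset.mem_Icc,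
        hSdef, Finset.mem_erase, Finset.mem_Iic]
      constructor
      · rintro ⟨h1, h2, h3⟩
        have hk1 : p.1 ≤ K := by
          have e1 : htv b = p.1 * htv p.2 := by rw [h3, htv_smul]
          have e2 := htv_pos h2
          have e3 : htv b ≤ K := htv_mono hbd
          nlinarith
        have hk2 : p.2 ≤ d := le_trans (le_trans (le_nsmul_self h1) (le_of_eq h3.symm)) hbd
        exact ⟨⟨⟨h1, hk1⟩, h2, hk2⟩, h3⟩
      · rintro ⟨⟨⟨h1, _⟩, h2, _⟩, h3⟩
        exact ⟨h1, h2, h3⟩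
    rw [hset, finsum_mem_coe_finset, Finset.sum_filter, Finset.sum_product, Finset.sum_comm]
  -- combine
  have hhH : ∀ b : σ →₀ ℕ, b ≤ d → coeff b h = coeff b (∑ lam ∈ S, ∑ n ∈ (m lam).support,
      ((m lam n : ℤ) : MvPowerSeries σ R) *
        (invOfUnit (1 - MvPowerSeries.monomial lam (c n)) 1 *
          Dop (1 - MvPowerSeries.monomial lam (c n)))) := by
    intro b hbd
    by_cases hb0 : b = 0
    · rw [hb0, hh0, hH0]
    · rw [hhb' b hbd hb0, hHb b hbd hb0]
  calc (htv d : R) * coeff d f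
      = (htv d : R) * coeff d (∏ lam ∈ S, Fl lam) := by rw [hfP d le_rfl]
    _ = coeff d (Dop (∏ lam ∈ S, Fl lam)) := (coeff_Dop d _).symm
    _ = coeff d ((∏ lam ∈ S, Fl lam) * ∑ lam ∈ S, ∑ n ∈ (m lam).support,
          ((m lam n : ℤ) : MvPowerSeries σ R) *
            (invOfUnit (1 - MvPowerSeries.monomial lam (c n)) 1 *
              Dop (1 - MvPowerSeries.monomial lam (c n)))) := by rw [hDP]
    _ = coeff d (f * h) := by
        classical
        rw [coeff_mul, coeff_mul]
        refine Finset.sum_congr rfl fun p hp => ?_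
        have hp' := Finset.HasAntidiagonal.mem_antidiagonal.mp hp
        have h1 : p.1 ≤ d := hp' ▸ le_self_add
        have h2 : p.2 ≤ d := hp' ▸ le_add_self
        rw [← hfP p.1 h1, ← hhH p.2 h2]

end Stmt8Aux

/-- **Logarithmic derivative of the product form** (proof of Theorem 5.1): if
`f ∈ MvPowerSeries σ ℤ[t]` has constant coefficient `1` and product-form exponent family
`m` (i.e. `f = ∏_{λ≠0}∏_{n≥0} (1 - tⁿX^λ)^{m(λ,n)}` coefficientwise), and `D` is the
operator with `coeff d (D f) = ht(d)·coeff d f`, then `D f = f * h`, where `h` has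
constant coefficient `0` and coefficient at each nonzero `d` equal to
`-∑_{(k,κ) : 0<k, κ≠0, d = k·κ} ht(κ) · ∑_{n} m(κ,n) t^{k·n}`. -/
theorem stmt_8 (σ : Type*) [Fintype σ]
    (f : MvPowerSeries σ (Polynomial ℤ))
    (hf : MvPowerSeries.constantCoeff (σ := σ) (R := Polynomial ℤ) f = 1)
    (m : (σ →₀ ℕ) → (ℕ →₀ ℤ)) (hm0 : m 0 = 0)
    (hm : ∀ d : σ →₀ ℕ, MvPowerSeries.coeff (R := Polynomial ℤ) d f =
      MvPowerSeries.coeff (R := Polynomial ℤ) d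
        (∏ lam ∈ (open Classical in Finset.Iic d).erase 0, ∏ n ∈ (m lam).support,
          zpowSeries (1 - MvPowerSeries.monomial (R := Polynomial ℤ) lam (Polynomial.X ^ n))
            (m lam n))) :
    ∃ h : MvPowerSeries σ (Polynomial ℤ),
      MvPowerSeries.coeff (R := Polynomial ℤ) 0 h = 0 ∧
      (∀ d : σ →₀ ℕ, d ≠ 0 →
        MvPowerSeries.coeff (R := Polynomial ℤ) d h =
          -∑ᶠ p ∈ {p : ℕ × (σ →₀ ℕ) | 0 < p.1 ∧ p.2 ≠ 0 ∧ d = p.1 • p.2},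
            (htv p.2 : Polynomial ℤ) *
              ((m p.2).sum fun n c => c • (Polynomial.X : Polynomial ℤ) ^ (p.1 * n))) ∧
      (∀ d : σ →₀ ℕ,
        (htv d : Polynomial ℤ) * MvPowerSeries.coeff (R := Polynomial ℤ) d f =
          MvPowerSeries.coeff (R := Polynomial ℤ) d (f * h)) := by
  refine ⟨fun b => if b = 0 then 0 else
      -∑ᶠ p ∈ {p : ℕ × (σ →₀ ℕ) | 0 < p.1 ∧ p.2 ≠ 0 ∧ b = p.1 • p.2},
        (htv p.2 : Polynomial ℤ) *
          ((m p.2).sum fun n c => c • (Polynomial.X : Polynomial ℤ) ^ (p.1 * n)),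
    if_pos rfl, fun d hd => if_neg hd, fun d => ?_⟩
  refine Stmt8Aux.main_aux (fun n => (Polynomial.X : Polynomial ℤ) ^ n) f m hm _
    (if_pos rfl) (fun b hb => ?_) d
  refine (if_neg hb).trans ?_
  congr 1
  refine finsum_mem_congr rfl fun p _ => ?_
  refine congrArg _ ?_
  refine Finsupp.sum_congr fun n _ => ?_
  rw [pow_mul']
end

section
/- Let α be a type, s a nonempty multiset over α, and a an element of s. Then s.card multiplied by the number of lists l : List α whose underlying multiset is s and whose first entry is a, equals (the multiplicity of a in s) multiplied by the total number of lists whose underlying multiset is s. (Both sets of lists are finite.) -/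
open Finset

private lemma aux_count (a : α) [DecidableEq α] :
    ∀ l : List α, ((Finset.range l.length).filter fun i => l[i]? = some a).card = l.count a := by
  intro l
  induction l with
  | nil => simp
  | cons b l ih =>
    rw [Finset.card_filter, List.length_cons, Finset.sum_range_succ']
    simp only [List.getElem?_cons_succ, List.getElem?_cons_zero, ← Finset.card_filter, ih,
      List.count_cons]
    by_cases h : b = a <;> simp [h]

/-- **Counting orderings of a multiset with prescribed first entry** (proof of Theorem
5.1): for a nonempty multiset `s` over `α` and `a ∈ s`, both the set of lists representing
`s` and the subset of those starting with `a` are finite, and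
`|s| · #{lists l with ↑l = s and first entry a} = (multiplicity of a in s) · #{lists l with ↑l = s}`. -/
theorem stmt_12 (α : Type*) [DecidableEq α] (s : Multiset α) (hs : s ≠ 0) (a : α) (ha : a ∈ s) :
    {l : List α | (l : Multiset α) = s}.Finite ∧
    {l : List α | (l : Multiset α) = s ∧ l.head? = some a}.Finite ∧
    Multiset.card s * {l : List α | (l : Multiset α) = s ∧ l.head? = some a}.ncard =
      s.count a * {l : List α | (l : Multiset α) = s}.ncard := by
  classical
  set n := Multiset.card s with hn
  set NF : Finset (List α) := s.toList.permutations.toFinset with hNF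
  have hmem : ∀ l : List α, l ∈ NF ↔ (l : Multiset α) = s := by
    intro l
    rw [hNF, List.mem_toFinset, List.mem_permutations, ← Multiset.coe_eq_coe,
      Multiset.coe_toList]
  set AF : Finset (List α) := NF.filter (fun l => l.head? = some a) with hAF
  have hset1 : {l : List α | (l : Multiset α) = s} = ↑NF := by
    ext l; simp [hmem l]
  have hset2 : {l : List α | (l : Multiset α) = s ∧ l.head? = some a} = ↑AF := by
    ext l; simp [hAF, hmem l]
  refine ⟨hset1 ▸ NF.finite_toSet, hset2 ▸ AF.finite_toSet, ?_⟩
  rw [hset1, hset2, Set.ncard_coe_finset, Set.ncard_coe_finset]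
  have hlen : ∀ l ∈ NF, l.length = n := by
    intro l hl
    have h := (hmem l).1 hl
    rw [hn, ← h]
    simp
  -- double counting
  have key : ∑ l ∈ NF, ((Finset.range n).filter fun i => l[i]? = some a).card
      = ∑ i ∈ Finset.range n, (NF.filter fun l => l[i]? = some a).card := by
    simp_rw [Finset.card_filter]
    exact Finset.sum_comm
  -- LHS of key
  have hL : ∑ l ∈ NF, ((Finset.range n).filter fun i => l[i]? = some a).card
      = s.count a * NF.card := by
    rw [Finset.sum_congr rfl (fun l hl => by
      rw [← hlen l hl, aux_count, ← Multiset.coe_count, (hmem l).1 hl])]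
    rw [Finset.sum_const, smul_eq_mul, mul_comm]
  -- RHS of key: each term equals AF.card, via rotation bijection
  have hR : ∀ i ∈ Finset.range n, (NF.filter fun l => l[i]? = some a).card = AF.card := by
    intro i hi
    rw [Finset.mem_range] at hi
    apply Finset.card_bij (fun l _ => l.rotate i)
    · intro l hl
      rw [Finset.mem_filter] at hl ⊢
      have hmemN : l.rotate i ∈ NF := by
        rw [hmem] at hl ⊢
        rw [← hl.1, Multiset.coe_eq_coe]
        exact l.rotate_perm i
      refine ⟨hmemN, ?_⟩
      rw [List.head?_rotate (by rw [hlen l hl.1]; exact hi)]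
      exact hl.2
    · intro l₁ h₁ l₂ h₂ heq
      rw [Finset.mem_filter] at h₁ h₂
      have e1 : (l₁.rotate i).rotate (n - i) = l₁ := by
        rw [List.rotate_rotate, Nat.add_sub_cancel' hi.le, ← hlen l₁ h₁.1, List.rotate_length]
      have e2 : (l₂.rotate i).rotate (n - i) = l₂ := by
        rw [List.rotate_rotate, Nat.add_sub_cancel' hi.le, ← hlen l₂ h₂.1, List.rotate_length]
      rw [← e1, ← e2, heq]
    · intro l' hl'
      rw [Finset.mem_filter] at hl'
      have hmemN : l'.rotate (n - i) ∈ NF := by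
        rw [hmem] at hl' ⊢
        rw [← hl'.1, Multiset.coe_eq_coe]
        exact l'.rotate_perm _
      have e : (l'.rotate (n - i)).rotate i = l' := by
        rw [List.rotate_rotate, Nat.sub_add_cancel hi.le, ← hlen l' hl'.1, List.rotate_length]
      refine ⟨l'.rotate (n - i), ?_, e⟩
      rw [Finset.mem_filter]
      refine ⟨hmemN, ?_⟩
      rw [← List.head?_rotate (by rw [hlen _ hmemN]; exact hi), e]
      exact hl'.2
  rw [hL, Finset.sum_congr rfl hR, Finset.sum_const, Finset.card_range, smul_eq_mul] at key
  rw [key]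
end

section
/- Let α be a type, w : α → ℕ a weight function, and s a nonempty multiset over α. Then s.card multiplied by the sum, over all lists l : List α whose underlying multiset is s, of w(first entry of l), equals (∑_{a ∈ s} w(a), the sum of w over s with multiplicity) multiplied by the total number of lists whose underlying multiset is s. -/
lemma headI_eq_getD (m : List ℕ) : m.headI = m.getD 0 0 := by
  cases m <;> rfl

lemma sum_range_getD (m : List ℕ) : ∑ k ∈ Finset.range m.length, m.getD k 0 = m.sum := by
  induction m with
  | nil => simp
  | cons a t ih =>
    rw [List.length_cons, Finset.sum_range_succ']
    simp only [List.getD_cons_succ, List.getD_cons_zero, List.sum_cons, ih, Nat.add_comm]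

/-- **Weighted count of orderings of a multiset** (proof of Theorem 5.1, the step showing
the equivalence of the unordered formula (38) and the ordered formula (39)): for a weight
function `w : α → ℕ` and a nonempty multiset `s`,
`|s| · ∑_{lists l with ↑l = s} w(first entry of l) = (∑_{a ∈ s} w a) · #{lists l with ↑l = s}`.
(The weight of the first entry of `l` is encoded as the head of `l.map w`.) -/
theorem stmt_13 (α : Type*) (w : α → ℕ) (s : Multiset α) (hs : s ≠ 0) :
    Multiset.card s *
        ∑ᶠ l ∈ {l : List α | (l : Multiset α) = s}, (l.map w).headI =
      (s.map w).sum * {l : List α | (l : Multiset α) = s}.ncard := by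
  classical
  set n := Multiset.card s with hn
  have hnpos : 0 < n := by
    simpa [hn] using Multiset.card_pos.2 hs
  set S : Finset (List α) := s.toList.permutations.toFinset with hS
  have hmem : ∀ l : List α, l ∈ S ↔ (l : Multiset α) = s := by
    intro l
    rw [hS, List.mem_toFinset, List.mem_permutations]
    constructor
    · intro h
      rw [← Multiset.coe_toList s]
      exact Multiset.coe_eq_coe.2 h
    · intro h
      have : (l : Multiset α) = (s.toList : Multiset α) := by
        rw [h, Multiset.coe_toList]
      exact Multiset.coe_eq_coe.1 this
  have hset : {l : List α | (l : Multiset α) = s} = (S : Set (List α)) := by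
    ext l; simp [hmem l]
  rw [hset, finsum_mem_coe_finset, Set.ncard_coe_finset]
  have hlen : ∀ l ∈ S, l.length = n := by
    intro l hl
    have : (l : Multiset α) = s := (hmem l).1 hl
    rw [hn, ← this, Multiset.coe_card]
  -- rotation invariance of the sum
  have hrot : ∀ k, k ≤ n → ∀ g : List α → ℕ,
      ∑ l ∈ S, g (l.rotate k) = ∑ l ∈ S, g l := by
    intro k hk g
    refine Finset.sum_nbij' (fun l => l.rotate k) (fun l => l.rotate (n - k)) ?_ ?_ ?_ ?_ ?_
    · intro l hl
      rw [hmem] at hl ⊢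
      rw [← hl]
      exact Multiset.coe_eq_coe.2 (l.rotate_perm k)
    · intro l hl
      rw [hmem] at hl ⊢
      rw [← hl]
      exact Multiset.coe_eq_coe.2 (l.rotate_perm (n - k))
    · intro l hl
      show (l.rotate k).rotate (n - k) = l
      rw [List.rotate_rotate, Nat.add_sub_cancel' hk, ← hlen l hl, List.rotate_length]
    · intro l hl
      show (l.rotate (n - k)).rotate k = l
      rw [List.rotate_rotate, Nat.sub_add_cancel hk, ← hlen l hl, List.rotate_length]
    · intro l hl; rfl
  -- main computation
  calc n * ∑ l ∈ S, (l.map w).headI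
      = ∑ _k ∈ Finset.range n, ∑ l ∈ S, (l.map w).headI := by
        rw [Finset.sum_const, Finset.card_range, smul_eq_mul]
    _ = ∑ k ∈ Finset.range n, ∑ l ∈ S, ((l.rotate k).map w).headI := by
        refine Finset.sum_congr rfl fun k hk => ?_
        exact (hrot k (le_of_lt (Finset.mem_range.1 hk)) (fun l => (l.map w).headI)).symm
    _ = ∑ l ∈ S, ∑ k ∈ Finset.range n, ((l.rotate k).map w).headI := Finset.sum_comm
    _ = ∑ l ∈ S, (s.map w).sum := by
        refine Finset.sum_congr rfl fun l hl => ?_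
        have hml : (l.map w).length = n := by rw [List.length_map, hlen l hl]
        have hmw : ((l : Multiset α).map w) = (l.map w : Multiset ℕ) := by simp
        have hsum : (s.map w).sum = (l.map w).sum := by
          rw [← (hmem l).1 hl, hmw, Multiset.sum_coe]
        rw [hsum]
        have hstep : ∀ k ∈ Finset.range n,
            ((l.rotate k).map w).headI = (l.map w).getD k 0 := by
          intro k hk
          have hk' : k < n := Finset.mem_range.1 hk
          have hkl : k < (l.map w).length := by rw [hml]; exact hk'
          have h0 : 0 < ((l.map w).rotate k).length := by
            rw [List.length_rotate, hml]; exact hnpos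
          rw [List.map_rotate, headI_eq_getD, List.getD_eq_getElem _ _ h0,
            List.getElem_rotate, List.getD_eq_getElem _ _ hkl]
          congr 1
          rw [hml]
          rw [Nat.zero_add]
          exact Nat.mod_eq_of_lt hk'
        rw [Finset.sum_congr rfl hstep, ← hml, sum_range_getD]
    _ = (s.map w).sum * S.card := by
        rw [Finset.sum_const, smul_eq_mul, mul_comm]
end

section
/- Let σ be a finite type, R a commutative ring, A a subset of σ, and let π_A : MvPowerSeries σ R → MvPowerSeries σ R be the map defined by: the coefficient of π_A(f) at an exponent vector d equals the coefficient of f at d if the support of d is contained in A, and 0 otherwise. Let S be an additive submonoid of ℕ^σ and let T = {d ∈ S | support of d ⊆ A} (an additive submonoid). Let f ∈ MvPowerSeries σ R have constant coefficient a unit, and let g be the inverse of f relative to S (i.e. g is supported on S and (f·g)|_S = 1). Then π_A(g) is the inverse of π_A(f) relative to T: π_A(g) is supported on T and (π_A(f)·π_A(g))|_T = 1. -/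
open scoped Classical


/-- Restriction of a multivariate power series to the variables in `A`: the coefficient
at `d` is kept when the support of `d` is contained in `A`, and set to `0` otherwise. -/
noncomputable def restrictVars {σ : Type*} {R : Type*} [CommRing R] (A : Set σ)
    (f : MvPowerSeries σ R) : MvPowerSeries σ R :=
  fun d =>
    {e : σ →₀ ℕ | (e.support : Set σ) ⊆ A}.indicator (fun e => MvPowerSeries.coeff e f) d

lemma coeff_restrictVars {σ : Type*} {R : Type*} [CommRing R] (A : Set σ)
    (f : MvPowerSeries σ R) (d : σ →₀ ℕ) :
    MvPowerSeries.coeff d (restrictVars A f) =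
      if (d.support : Set σ) ⊆ A then MvPowerSeries.coeff d f else 0 := by
  simp [restrictVars, MvPowerSeries.coeff, Set.indicator]
  rfl

lemma support_sub_of_add {σ : Type*} {a b d : σ →₀ ℕ} {A : Set σ}
    (h : a + b = d) (hd : (d.support : Set σ) ⊆ A) : (a.support : Set σ) ⊆ A := by
  intro s hs
  apply hd
  simp only [Finset.mem_coe, Finsupp.mem_support_iff] at hs ⊢
  subst h
  simp only [Finsupp.add_apply]
  omega

lemma coeff_mul_restrict {σ : Type*} {R : Type*} [CommRing R] (A : Set σ)
    (f g : MvPowerSeries σ R) (d : σ →₀ ℕ) (hd : (d.support : Set σ) ⊆ A) :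
    MvPowerSeries.coeff d (restrictVars A f * restrictVars A g) =
      MvPowerSeries.coeff d (f * g) := by
  rw [MvPowerSeries.coeff_mul, MvPowerSeries.coeff_mul]
  refine Finset.sum_congr rfl fun p hp => ?_
  replace hp : p.1 + p.2 = d := by simpa using hp
  rw [coeff_restrictVars, coeff_restrictVars,
    if_pos (support_sub_of_add hp hd),
    if_pos (support_sub_of_add (by rw [add_comm]; exact hp) hd)]

/-- **Restriction of a relative inverse to a subset of the variables** (core of
Proposition 6.1): let `S` be an additive submonoid of exponent vectors,
`T = {d ∈ S | supp d ⊆ A}`, and let `f` have unit constant coefficient. If `g` is the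
inverse of `f` relative to `S` (i.e. `g` is supported on `S` and `(f·g)|_S = 1`), then
`π_A(g)` is the inverse of `π_A(f)` relative to `T`: it is supported on `T` and
`(π_A(f)·π_A(g))|_T = 1`. -/
theorem stmt_15 (σ : Type*) [Fintype σ] (R : Type*) [CommRing R] (A : Set σ)
    (S : AddSubmonoid (σ →₀ ℕ)) (f g : MvPowerSeries σ R)
    (hf : IsUnit (MvPowerSeries.constantCoeff f))
    (hg_supp : ∀ d : σ →₀ ℕ, d ∉ S → MvPowerSeries.coeff d g = 0)
    (hfg0 : MvPowerSeries.coeff 0 (f * g) = 1)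
    (hfg : ∀ d : σ →₀ ℕ, d ∈ S → d ≠ 0 → MvPowerSeries.coeff d (f * g) = 0) :
    (∀ d : σ →₀ ℕ, ¬(d ∈ S ∧ (d.support : Set σ) ⊆ A) →
      MvPowerSeries.coeff d (restrictVars A g) = 0) ∧
    MvPowerSeries.coeff 0 (restrictVars A f * restrictVars A g) = 1 ∧
    (∀ d : σ →₀ ℕ, d ∈ S → (d.support : Set σ) ⊆ A → d ≠ 0 →
      MvPowerSeries.coeff d (restrictVars A f * restrictVars A g) = 0) := by
  refine ⟨fun d hd => ?_, ?_, fun d hdS hdA hd0 => ?_⟩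
  · rw [coeff_restrictVars]
    by_cases hA : (d.support : Set σ) ⊆ A
    · rw [if_pos hA]
      exact hg_supp d fun hS => hd ⟨hS, hA⟩
    · rw [if_neg hA]
  · rw [coeff_mul_restrict A f g 0 (by simp), hfg0]
  · rw [coeff_mul_restrict A f g d hdA]
    exact hfg d hdS hd0
end

section
/- Let σ be a finite type, R a commutative ring, and A a subset of σ with complement Aᶜ. Let f₁, f₂ ∈ MvPowerSeries σ R have constant coefficient a unit, with f₁ supported on exponent vectors whose support is contained in A and f₂ supported on exponent vectors whose support is contained in Aᶜ. Let S₁, S₂ be additive submonoids of ℕ^σ consisting, respectively, of vectors supported in A and of vectors supported in Aᶜ, and let g₁ be the inverse of f₁ relative to S₁ and g₂ the inverse of f₂ relative to S₂. Then g₁·g₂ is the inverse of f₁·f₂ relative to the additive submonoid S₁ + S₂ = {d₁ + d₂ | d₁ ∈ S₁, d₂ ∈ S₂}: g₁·g₂ is supported on S₁ + S₂ and ((f₁·f₂)·(g₁·g₂))|_{S₁+S₂} = 1. -/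
open MvPowerSeries

lemma supp_mul_aux {σ : Type*} {R : Type*} [CommRing R] (B : Set σ)
    (f g : MvPowerSeries σ R)
    (hf : ∀ d : σ →₀ ℕ, ¬ ((d.support : Set σ) ⊆ B) → MvPowerSeries.coeff d f = 0)
    (hg : ∀ d : σ →₀ ℕ, ¬ ((d.support : Set σ) ⊆ B) → MvPowerSeries.coeff d g = 0) :
    ∀ d : σ →₀ ℕ, ¬ ((d.support : Set σ) ⊆ B) → MvPowerSeries.coeff d (f * g) = 0 := by
  classical
  intro d hd
  rw [MvPowerSeries.coeff_mul]
  apply Finset.sum_eq_zero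
  rintro ⟨e₁, e₂⟩ hmem
  rw [Finset.HasAntidiagonal.mem_antidiagonal] at hmem
  by_cases h1 : (e₁.support : Set σ) ⊆ B
  · by_cases h2 : (e₂.support : Set σ) ⊆ B
    · exfalso
      apply hd
      rw [← hmem]
      intro s hs
      have hs' : s ∈ (e₁ + e₂).support := hs
      have := Finsupp.support_add (g₁ := e₁) (g₂ := e₂) hs'
      rcases Finset.mem_union.mp this with h | h
      · exact h1 (Finset.mem_coe.mpr h)
      · exact h2 (Finset.mem_coe.mpr h)
    · rw [hg e₂ h2, mul_zero]
  · rw [hf e₁ h1, zero_mul]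

/-- **Relative inverses multiply over a decomposition of the variables** (core of
Proposition 6.2). -/
theorem stmt_16 (σ : Type*) [Fintype σ] (R : Type*) [CommRing R] (A : Set σ)
    (f₁ f₂ g₁ g₂ : MvPowerSeries σ R)
    (S₁ S₂ : AddSubmonoid (σ →₀ ℕ))
    (hf₁ : IsUnit (MvPowerSeries.constantCoeff f₁))
    (hf₂ : IsUnit (MvPowerSeries.constantCoeff f₂))
    (hf₁supp : ∀ d : σ →₀ ℕ, ¬ ((d.support : Set σ) ⊆ A) →
      MvPowerSeries.coeff d f₁ = 0)
    (hf₂supp : ∀ d : σ →₀ ℕ, ¬ ((d.support : Set σ) ⊆ Aᶜ) →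
      MvPowerSeries.coeff d f₂ = 0)
    (hS₁ : ∀ d ∈ S₁, (d.support : Set σ) ⊆ A)
    (hS₂ : ∀ d ∈ S₂, (d.support : Set σ) ⊆ Aᶜ)
    (hg₁supp : ∀ d : σ →₀ ℕ, d ∉ S₁ → MvPowerSeries.coeff d g₁ = 0)
    (hg₁0 : MvPowerSeries.coeff 0 (f₁ * g₁) = 1)
    (hg₁ : ∀ d : σ →₀ ℕ, d ∈ S₁ → d ≠ 0 → MvPowerSeries.coeff d (f₁ * g₁) = 0)
    (hg₂supp : ∀ d : σ →₀ ℕ, d ∉ S₂ → MvPowerSeries.coeff d g₂ = 0)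
    (hg₂0 : MvPowerSeries.coeff 0 (f₂ * g₂) = 1)
    (hg₂ : ∀ d : σ →₀ ℕ, d ∈ S₂ → d ≠ 0 → MvPowerSeries.coeff d (f₂ * g₂) = 0) :
    (∀ d : σ →₀ ℕ, ¬ (∃ d₁ ∈ S₁, ∃ d₂ ∈ S₂, d = d₁ + d₂) →
      MvPowerSeries.coeff d (g₁ * g₂) = 0) ∧
    MvPowerSeries.coeff 0 ((f₁ * f₂) * (g₁ * g₂)) = 1 ∧
    (∀ d : σ →₀ ℕ, (∃ d₁ ∈ S₁, ∃ d₂ ∈ S₂, d = d₁ + d₂) → d ≠ 0 →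
      MvPowerSeries.coeff d ((f₁ * f₂) * (g₁ * g₂)) = 0) := by
  classical
  have key : (f₁ * f₂) * (g₁ * g₂) = (f₁ * g₁) * (f₂ * g₂) := by ring
  -- support of f₁*g₁ in A
  have hg₁suppA : ∀ d : σ →₀ ℕ, ¬ ((d.support : Set σ) ⊆ A) →
      MvPowerSeries.coeff d g₁ = 0 := by
    intro d hd
    by_cases h : d ∈ S₁
    · exact absurd (hS₁ d h) hd
    · exact hg₁supp d h
  have hg₂suppA : ∀ d : σ →₀ ℕ, ¬ ((d.support : Set σ) ⊆ Aᶜ) →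
      MvPowerSeries.coeff d g₂ = 0 := by
    intro d hd
    by_cases h : d ∈ S₂
    · exact absurd (hS₂ d h) hd
    · exact hg₂supp d h
  have h₁supp := supp_mul_aux A f₁ g₁ hf₁supp hg₁suppA
  have h₂supp := supp_mul_aux Aᶜ f₂ g₂ hf₂supp hg₂suppA
  refine ⟨?_, ?_, ?_⟩
  · intro d hd
    rw [MvPowerSeries.coeff_mul]
    apply Finset.sum_eq_zero
    rintro ⟨e₁, e₂⟩ hmem
    rw [Finset.HasAntidiagonal.mem_antidiagonal] at hmem
    by_cases h1 : e₁ ∈ S₁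
    · by_cases h2 : e₂ ∈ S₂
      · exact absurd ⟨e₁, h1, e₂, h2, hmem.symm⟩ hd
      · rw [hg₂supp e₂ h2, mul_zero]
    · rw [hg₁supp e₁ h1, zero_mul]
  · rw [key, MvPowerSeries.coeff_zero_eq_constantCoeff, map_mul]
    rw [MvPowerSeries.coeff_zero_eq_constantCoeff] at hg₁0 hg₂0
    rw [hg₁0, hg₂0, one_mul]
  · rintro d ⟨d₁, hd₁, d₂, hd₂, rfl⟩ hd0
    rw [key, MvPowerSeries.coeff_mul]
    apply Finset.sum_eq_zero
    rintro ⟨e₁, e₂⟩ hmem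
    rw [Finset.HasAntidiagonal.mem_antidiagonal] at hmem
    by_cases h1 : (e₁.support : Set σ) ⊆ A
    · by_cases h2 : (e₂.support : Set σ) ⊆ Aᶜ
      · -- uniqueness: e₁ = d₁, e₂ = d₂
        have hA₁ := hS₁ d₁ hd₁
        have hA₂ := hS₂ d₂ hd₂
        have heq : e₁ = d₁ ∧ e₂ = d₂ := by
          have hpt : ∀ s, e₁ s + e₂ s = d₁ s + d₂ s := by
            intro s
            have := congrFun (congrArg (fun f : σ →₀ ℕ => (f : σ → ℕ)) hmem) s
            simpa using this
          constructor <;> ext s <;>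
          · by_cases hs : s ∈ A
            · have he₂ : e₂ s = 0 := by
                by_contra h
                exact (h2 (Finsupp.mem_support_iff.mpr h)) hs
              have hd₂' : d₂ s = 0 := by
                by_contra h
                exact (hA₂ (Finsupp.mem_support_iff.mpr h) hs).elim
              have := hpt s
              omega
            · have he₁ : e₁ s = 0 := by
                by_contra h
                exact hs (h1 (Finsupp.mem_support_iff.mpr h))
              have hd₁' : d₁ s = 0 := by
                by_contra h
                exact hs (hA₁ (Finsupp.mem_support_iff.mpr h))
              have := hpt s
              omega
        obtain ⟨rfl, rfl⟩ := heq
        by_cases h0 : e₁ = 0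
        · subst h0
          have : e₂ ≠ 0 := by simpa using hd0
          rw [hg₂ e₂ hd₂ this, mul_zero]
        · rw [hg₁ e₁ hd₁ h0, zero_mul]
      · rw [h₂supp e₂ h2, mul_zero]
    · rw [h₁supp e₁ h1, zero_mul]
end
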